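/- arXiv:2502.03320 — 3 statements merged into one kernel-verified Lean document; each statement's English description precedes it below -/
import Mathlib

section
/- For every closed term p of sort Proc of the imperative process algebra deACPei, there exists a head normal form q such that the equation p = q is derivable from the axioms of deACPei. -/
/-!
A formalization of the imperative process algebra deACPei from
"Rely/Guarantee Logic and Imperative Process Algebra".

Data is modelled semantically: data terms of sort `Data` are functions from
flexible-variable valuations to elements of the carrier `D` of sort `Data` of
the data algebra `𝔇`, and condition terms are functions from valuations to
propositions.  (This identifies data terms, respectively condition terms, that
are provably equal, respectively equivalent, in `𝔇`, exactly as the axioms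
IMP1 and IMP2 of deACPei do.)
-/

namespace DeACPei

open scoped Classical

variable {A V D : Type}

/-- flexible variable valuations -/
abbrev Val (V D : Type) : Type := V → D

/-- data terms of sort `Data` (modelled semantically) -/
abbrev Expr (V D : Type) : Type := (V → D) → D

/-- condition terms of sort `Cond` over current-value flexible variable
constants (modelled semantically) -/
abbrev Cond (V D : Type) : Type := (V → D) → Prop

/-- condition terms of sort `Cond` over current-value and previous-value
flexible variable constants; the first argument provides the current values,
the second the previous values -/
abbrev Cond2 (V D : Type) : Type := (V → D) → (V → D) → Prop

/-- the flexible variable valuation `ρ⟨d/v⟩` -/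
noncomputable def upd (ρ : Val V D) (v : V) (d : D) : Val V D :=
  fun w => if w = v then d else ρ w

/-- the data term denoting a fixed value `d` -/
def constE (d : D) : Expr V D := fun _ => d

/-- atomic process terms: basic actions, data-parameterized actions
`a(e₁,…,eₙ)` (with `n ≥ 1`), and assignment actions `v := e` -/
inductive Atom (A V D : Type) : Type where
  | basic : A → Atom A V D
  | param : A → Expr V D → List (Expr V D) → Atom A V D
  | assign : V → Expr V D → Atom A V D

/-- whether an atomic process term is an assignment action -/
def Atom.isAssign : Atom A V D → Prop
  | .assign _ _ => True
  | _ => False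

/-- evaluation of an atomic process term under a flexible variable valuation -/
def Atom.evalA (ρ : Val V D) : Atom A V D → Atom A V D
  | .basic a => .basic a
  | .param a e es => .param a (constE (e ρ)) (es.map fun f => constE (f ρ))
  | .assign v e => .assign v (constE (e ρ))

/-- closed process terms of deACPei -/
inductive P (A V D : Type) : Type where
  | atom : Atom A V D → P A V D
  | delta : P A V D
  | eps : P A V D
  | alt : P A V D → P A V D → P A V D
  | seq : P A V D → P A V D → P A V D
  | iter : P A V D → P A V D → P A V D
  | par : P A V D → P A V D → P A V D
  | lmerge : P A V D → P A V D → P A V D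
  | cmerge : P A V D → P A V D → P A V D
  | encap : Set A → P A V D → P A V D
  | gc : Cond V D → P A V D → P A V D
  | eval : Val V D → P A V D → P A V D

/-- the successful termination relation `t ↓ ρ` of the structural operational
semantics of deACPei -/
inductive Term : P A V D → Val V D → Prop where
  | eps : ∀ {ρ : Val V D}, Term .eps ρ
  | altL : ∀ {x y : P A V D} {ρ}, Term x ρ → Term (.alt x y) ρ
  | altR : ∀ {x y : P A V D} {ρ}, Term y ρ → Term (.alt x y) ρ
  | seq : ∀ {x y : P A V D} {ρ}, Term x ρ → Term y ρ → Term (.seq x y) ρ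
  | iter : ∀ {x y : P A V D} {ρ}, Term y ρ → Term (.iter x y) ρ
  | par : ∀ {x y : P A V D} {ρ}, Term x ρ → Term y ρ → Term (.par x y) ρ
  | encap : ∀ {x : P A V D} {H ρ}, Term x ρ → Term (.encap H x) ρ
  | gc : ∀ {x : P A V D} {φ : Cond V D} {ρ}, φ ρ → Term x ρ → Term (.gc φ x) ρ
  | eval : ∀ {x : P A V D} {ρ ρ'}, Term x ρ → Term (.eval ρ x) ρ'

/-- the transition relation `t —(ρ,α)→ t′` of the structural operational
semantics of deACPei, relative to the communication function `γ` (with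
`γ a b = none` meaning that the communication of `a` and `b` is `δ`) -/
inductive Step (γ : A → A → Option A) :
    P A V D → Val V D → Atom A V D → P A V D → Prop where
  | atom : ∀ {α : Atom A V D} {ρ}, Step γ (.atom α) ρ α .eps
  | altL : ∀ {x y x' : P A V D} {ρ α}, Step γ x ρ α x' → Step γ (.alt x y) ρ α x'
  | altR : ∀ {x y y' : P A V D} {ρ α}, Step γ y ρ α y' → Step γ (.alt x y) ρ α y'
  | seqL : ∀ {x y x' : P A V D} {ρ α},
      Step γ x ρ α x' → Step γ (.seq x y) ρ α (.seq x' y)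
  | seqR : ∀ {x y y' : P A V D} {ρ α},
      Term x ρ → Step γ y ρ α y' → Step γ (.seq x y) ρ α y'
  | iterExit : ∀ {x y y' : P A V D} {ρ α},
      Step γ y ρ α y' → Step γ (.iter x y) ρ α y'
  | iterLoop : ∀ {x y x' : P A V D} {ρ α},
      Step γ x ρ α x' → Step γ (.iter x y) ρ α (.seq x' (.iter x y))
  | parL : ∀ {x y x' : P A V D} {ρ α},
      Step γ x ρ α x' → Step γ (.par x y) ρ α (.par x' y)
  | parR : ∀ {x y y' : P A V D} {ρ α},
      Step γ y ρ α y' → Step γ (.par x y) ρ α (.par x y')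
  | parC : ∀ {x y x' y' : P A V D} {ρ a b c},
      Step γ x ρ (.basic a) x' → Step γ y ρ (.basic b) y' → γ a b = some c →
      Step γ (.par x y) ρ (.basic c) (.par x' y')
  | parCD : ∀ {x y x' y' : P A V D} {ρ a b c e e' es es'},
      Step γ x ρ (.param a e es) x' → Step γ y ρ (.param b e' es') y' →
      γ a b = some c → e ρ = e' ρ →
      List.Forall₂ (fun (f g : Expr V D) => f ρ = g ρ) es es' →
      Step γ (.par x y) ρ (.param c e es) (.par x' y')
  | lmerge : ∀ {x y x' : P A V D} {ρ α},
      Step γ x ρ α x' → Step γ (.lmerge x y) ρ α (.par x' y)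
  | cmergeC : ∀ {x y x' y' : P A V D} {ρ a b c},
      Step γ x ρ (.basic a) x' → Step γ y ρ (.basic b) y' → γ a b = some c →
      Step γ (.cmerge x y) ρ (.basic c) (.par x' y')
  | cmergeCD : ∀ {x y x' y' : P A V D} {ρ a b c e e' es es'},
      Step γ x ρ (.param a e es) x' → Step γ y ρ (.param b e' es') y' →
      γ a b = some c → e ρ = e' ρ →
      List.Forall₂ (fun (f g : Expr V D) => f ρ = g ρ) es es' →
      Step γ (.cmerge x y) ρ (.param c e es) (.par x' y')
  | encapB : ∀ {x x' : P A V D} {H ρ a},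
      Step γ x ρ (.basic a) x' → a ∉ H →
      Step γ (.encap H x) ρ (.basic a) (.encap H x')
  | encapP : ∀ {x x' : P A V D} {H ρ a e es},
      Step γ x ρ (.param a e es) x' → a ∉ H →
      Step γ (.encap H x) ρ (.param a e es) (.encap H x')
  | encapA : ∀ {x x' : P A V D} {H ρ v e},
      Step γ x ρ (.assign v e) x' →
      Step γ (.encap H x) ρ (.assign v e) (.encap H x')
  | gc : ∀ {x x' : P A V D} {φ : Cond V D} {ρ α},
      φ ρ → Step γ x ρ α x' → Step γ (.gc φ x) ρ α x'
  | evalB : ∀ {x x' : P A V D} {ρ ρ' a},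
      Step γ x ρ (.basic a) x' →
      Step γ (.eval ρ x) ρ' (.basic a) (.eval ρ x')
  | evalP : ∀ {x x' : P A V D} {ρ ρ' a e es},
      Step γ x ρ (.param a e es) x' →
      Step γ (.eval ρ x) ρ'
        (.param a (constE (e ρ)) (es.map fun f => constE (f ρ))) (.eval ρ x')
  | evalA : ∀ {x x' : P A V D} {ρ ρ' v e},
      Step γ x ρ (.assign v e) x' →
      Step γ (.eval ρ x) ρ' (.assign v (constE (e ρ)))
        (.eval (upd ρ v (e ρ)) x')

/-- data equivalence of atomic process terms (`≃`) -/
inductive DataEq : Atom A V D → Atom A V D → Prop where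
  | basic : ∀ {a : A}, DataEq (.basic a) (.basic a)
  | param : ∀ {a : A} {e e' : Expr V D} {es es' : List (Expr V D)},
      (∀ ρ, e ρ = e' ρ) →
      List.Forall₂ (fun (f g : Expr V D) => ∀ ρ, f ρ = g ρ) es es' →
      DataEq (.param a e es) (.param a e' es')
  | assign : ∀ {v : V} {e e' : Expr V D},
      (∀ ρ, e ρ = e' ρ) → DataEq (.assign v e) (.assign v e')

/-- `R` is a bisimulation (with transitions matched up to data equivalence) -/
def IsBisim (γ : A → A → Option A) (R : P A V D → P A V D → Prop) : Prop :=
  ∀ t1 t2, R t1 t2 →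
    (∀ ρ α t1', Step γ t1 ρ α t1' →
        ∃ α' t2', DataEq α α' ∧ Step γ t2 ρ α' t2' ∧ R t1' t2') ∧
    (∀ ρ α t2', Step γ t2 ρ α t2' →
        ∃ α' t1', DataEq α α' ∧ Step γ t1 ρ α' t1' ∧ R t1' t2') ∧
    (∀ ρ, Term t1 ρ ↔ Term t2 ρ)

/-- bisimulation equivalence `t1 ↔ t2` -/
def Bisim (γ : A → A → Option A) (t1 t2 : P A V D) : Prop :=
  ∃ R, IsBisim γ R ∧ R t1 t2

/-- a member of `Act ∪ {δ}` as a process term -/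
def ofOptA : Option A → P A V D
  | some a => .atom (.basic a)
  | none => .delta

/-- a member of `AProcTerm ∪ {δ}` as a process term -/
def ofOptAtom : Option (Atom A V D) → P A V D
  | some α => .atom α
  | none => .delta

/-- the communication function extended to `Act ∪ {δ}` -/
def γe (γ : A → A → Option A) : Option A → Option A → Option A
  | some a, some b => γ a b
  | _, _ => none

/-- the (unconditional) equational axioms of deACPei -/
inductive Ax (γ : A → A → Option A) : P A V D → P A V D → Prop where
  | a1 : ∀ x y : P A V D, Ax γ (.alt x y) (.alt y x)
  | a2 : ∀ x y z : P A V D, Ax γ (.alt (.alt x y) z) (.alt x (.alt y z))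
  | a3 : ∀ x : P A V D, Ax γ (.alt x x) x
  | a4 : ∀ x y z : P A V D, Ax γ (.seq (.alt x y) z) (.alt (.seq x z) (.seq y z))
  | a5 : ∀ x y z : P A V D, Ax γ (.seq (.seq x y) z) (.seq x (.seq y z))
  | a6 : ∀ x : P A V D, Ax γ (.alt x .delta) x
  | a7 : ∀ x : P A V D, Ax γ (.seq .delta x) .delta
  | a8 : ∀ x : P A V D, Ax γ (.seq x .eps) x
  | a9 : ∀ x : P A V D, Ax γ (.seq .eps x) x
  | cm1e : ∀ x y : P A V D,
      Ax γ (.par x y)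
        (.alt (.alt (.alt (.lmerge x y) (.lmerge y x)) (.cmerge x y))
          (.seq (.encap Set.univ x) (.encap Set.univ y)))
  | cm2e : ∀ x : P A V D, Ax γ (.lmerge .eps x) .delta
  | cm3 : ∀ (α : Option (Atom A V D)) (x y : P A V D),
      Ax γ (.lmerge (.seq (ofOptAtom α) x) y) (.seq (ofOptAtom α) (.par x y))
  | cm4 : ∀ x y z : P A V D,
      Ax γ (.lmerge (.alt x y) z) (.alt (.lmerge x z) (.lmerge y z))
  | cm5e : ∀ x : P A V D, Ax γ (.cmerge .eps x) .delta
  | cm6e : ∀ x : P A V D, Ax γ (.cmerge x .eps) .delta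
  | cm7 : ∀ (a b : Option A) (x y : P A V D),
      Ax γ (.cmerge (.seq (ofOptA a) x) (.seq (ofOptA b) y))
        (.seq (ofOptA (γe γ a b)) (.par x y))
  | cm8 : ∀ x y z : P A V D,
      Ax γ (.cmerge (.alt x y) z) (.alt (.cmerge x z) (.cmerge y z))
  | cm9 : ∀ x y z : P A V D,
      Ax γ (.cmerge x (.alt y z)) (.alt (.cmerge x y) (.cmerge x z))
  | d0 : ∀ H : Set A, Ax γ (.encap H .eps) .eps
  | d1 : ∀ {H : Set A} {a : A}, a ∉ H →
      Ax γ (.encap H (.atom (.basic a))) (.atom (.basic a))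
  | d2 : ∀ {H : Set A} {a : A}, a ∈ H →
      Ax γ (.encap H (.atom (.basic a))) .delta
  | d3 : ∀ (H : Set A) (x y : P A V D),
      Ax γ (.encap H (.alt x y)) (.alt (.encap H x) (.encap H y))
  | d4 : ∀ (H : Set A) (x y : P A V D),
      Ax γ (.encap H (.seq x y)) (.seq (.encap H x) (.encap H y))
  | bks1 : ∀ x y : P A V D, Ax γ (.iter x y) (.alt (.seq x (.iter x y)) y)
  | bks5 : ∀ x y : P A V D, Ax γ (.iter (.alt x .eps) y) (.iter x y)
  | gc1 : ∀ x : P A V D, Ax γ (.gc (fun _ => True) x) x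
  | gc2 : ∀ x : P A V D, Ax γ (.gc (fun _ => False) x) .delta
  | gc3 : ∀ φ : Cond V D, Ax γ (.gc φ .delta) .delta
  | gc4 : ∀ (φ : Cond V D) (x y : P A V D),
      Ax γ (.gc φ (.alt x y)) (.alt (.gc φ x) (.gc φ y))
  | gc5 : ∀ (φ : Cond V D) (x y : P A V D),
      Ax γ (.gc φ (.seq x y)) (.seq (.gc φ x) y)
  | gc6 : ∀ (φ ψ : Cond V D) (x : P A V D),
      Ax γ (.gc φ (.gc ψ x)) (.gc (fun ρ => φ ρ ∧ ψ ρ) x)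
  | gc7 : ∀ (φ ψ : Cond V D) (x : P A V D),
      Ax γ (.gc (fun ρ => φ ρ ∨ ψ ρ) x) (.alt (.gc φ x) (.gc ψ x))
  | gc8 : ∀ (φ : Cond V D) (x y : P A V D),
      Ax γ (.lmerge (.gc φ x) y) (.gc φ (.lmerge x y))
  | gc9 : ∀ (φ : Cond V D) (x y : P A V D),
      Ax γ (.cmerge (.gc φ x) y) (.gc φ (.cmerge x y))
  | gc10 : ∀ (φ : Cond V D) (x y : P A V D),
      Ax γ (.cmerge x (.gc φ y)) (.gc φ (.cmerge x y))
  | gc11 : ∀ (H : Set A) (φ : Cond V D) (x : P A V D),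
      Ax γ (.encap H (.gc φ x)) (.gc φ (.encap H x))
  | v0 : ∀ ρ : Val V D, Ax γ (.eval ρ .eps) .eps
  | v1 : ∀ (ρ : Val V D) (α : Option A) (x : P A V D),
      Ax γ (.eval ρ (.seq (ofOptA α) x)) (.seq (ofOptA α) (.eval ρ x))
  | v2 : ∀ (ρ : Val V D) (a : A) (e : Expr V D) (es : List (Expr V D)) (x : P A V D),
      Ax γ (.eval ρ (.seq (.atom (.param a e es)) x))
        (.seq (.atom (.param a (constE (e ρ)) (es.map fun f => constE (f ρ))))
          (.eval ρ x))
  | v3 : ∀ (ρ : Val V D) (v : V) (e : Expr V D) (x : P A V D),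
      Ax γ (.eval ρ (.seq (.atom (.assign v e)) x))
        (.seq (.atom (.assign v (constE (e ρ)))) (.eval (upd ρ v (e ρ)) x))
  | v4 : ∀ (ρ : Val V D) (x y : P A V D),
      Ax γ (.eval ρ (.alt x y)) (.alt (.eval ρ x) (.eval ρ y))
  | v5 : ∀ (ρ : Val V D) (φ : Cond V D) (x : P A V D),
      Ax γ (.eval ρ (.gc φ x)) (.gc (fun _ => φ ρ) (.eval ρ x))
  | cm7da : ∀ {a b c : A} {e e' : Expr V D} {es es' : List (Expr V D)}
      (x y : P A V D), γ a b = some c → es.length = es'.length →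
      Ax γ (.cmerge (.seq (.atom (.param a e es)) x)
              (.seq (.atom (.param b e' es')) y))
        (.gc (fun ρ => e ρ = e' ρ ∧
                List.Forall₂ (fun (f g : Expr V D) => f ρ = g ρ) es es')
          (.seq (.atom (.param c e es)) (.par x y)))
  | cm7db : ∀ {a b : A} {e e' : Expr V D} {es es' : List (Expr V D)}
      (x y : P A V D), (γ a b = none ∨ es.length ≠ es'.length) →
      Ax γ (.cmerge (.seq (.atom (.param a e es)) x)
              (.seq (.atom (.param b e' es')) y)) .delta
  | cm7dc : ∀ {a : A} {e : Expr V D} {es : List (Expr V D)}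
      (α : Option (Atom A V D)) (x y : P A V D),
      (∀ (b : A) (f : Expr V D) (fs : List (Expr V D)), α ≠ some (.param b f fs)) →
      Ax γ (.cmerge (.seq (.atom (.param a e es)) x) (.seq (ofOptAtom α) y)) .delta
  | cm7dd : ∀ {a : A} {e : Expr V D} {es : List (Expr V D)}
      (α : Option (Atom A V D)) (x y : P A V D),
      (∀ (b : A) (f : Expr V D) (fs : List (Expr V D)), α ≠ some (.param b f fs)) →
      Ax γ (.cmerge (.seq (ofOptAtom α) x) (.seq (.atom (.param a e es)) y)) .delta
  | cm7de : ∀ {v : V} {e : Expr V D} (α : Option (Atom A V D)) (x y : P A V D),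
      Ax γ (.cmerge (.seq (.atom (.assign v e)) x) (.seq (ofOptAtom α) y)) .delta
  | cm7df : ∀ {v : V} {e : Expr V D} (α : Option (Atom A V D)) (x y : P A V D),
      Ax γ (.cmerge (.seq (ofOptAtom α) x) (.seq (.atom (.assign v e)) y)) .delta
  | d1da : ∀ {H : Set A} {a : A} {e : Expr V D} {es : List (Expr V D)}, a ∉ H →
      Ax γ (.encap H (.atom (.param a e es))) (.atom (.param a e es))
  | d2d : ∀ {H : Set A} {a : A} {e : Expr V D} {es : List (Expr V D)}, a ∈ H →
      Ax γ (.encap H (.atom (.param a e es))) .delta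
  | d1db : ∀ (H : Set A) (v : V) (e : Expr V D),
      Ax γ (.encap H (.atom (.assign v e))) (.atom (.assign v e))

/-- derivability of an equation between closed process terms from the axioms
of deACPei in conditional equational logic -/
inductive Deriv (γ : A → A → Option A) : P A V D → P A V D → Prop where
  | ax : ∀ {p q : P A V D}, Ax γ p q → Deriv γ p q
  | refl : ∀ p : P A V D, Deriv γ p p
  | symm : ∀ {p q : P A V D}, Deriv γ p q → Deriv γ q p
  | trans : ∀ {p q r : P A V D}, Deriv γ p q → Deriv γ q r → Deriv γ p r
  | altC : ∀ {p q p' q' : P A V D},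
      Deriv γ p q → Deriv γ p' q' → Deriv γ (.alt p p') (.alt q q')
  | seqC : ∀ {p q p' q' : P A V D},
      Deriv γ p q → Deriv γ p' q' → Deriv γ (.seq p p') (.seq q q')
  | iterC : ∀ {p q p' q' : P A V D},
      Deriv γ p q → Deriv γ p' q' → Deriv γ (.iter p p') (.iter q q')
  | parC : ∀ {p q p' q' : P A V D},
      Deriv γ p q → Deriv γ p' q' → Deriv γ (.par p p') (.par q q')
  | lmergeC : ∀ {p q p' q' : P A V D},
      Deriv γ p q → Deriv γ p' q' → Deriv γ (.lmerge p p') (.lmerge q q')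
  | cmergeC : ∀ {p q p' q' : P A V D},
      Deriv γ p q → Deriv γ p' q' → Deriv γ (.cmerge p p') (.cmerge q q')
  | encapC : ∀ {p q : P A V D} (H : Set A),
      Deriv γ p q → Deriv γ (.encap H p) (.encap H q)
  | gcC : ∀ {p q : P A V D} (φ : Cond V D),
      Deriv γ p q → Deriv γ (.gc φ p) (.gc φ q)
  | evalC : ∀ {p q : P A V D} (ρ : Val V D),
      Deriv γ p q → Deriv γ (.eval ρ p) (.eval ρ q)
  | rspE : ∀ {x y z : P A V D},
      Deriv γ (.encap Set.univ x) .delta → Deriv γ z (.alt (.seq x z) y) →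
      Deriv γ z (.iter x y)

/-- derivability of an equation between closed process terms from the axioms
A1 and A2 alone -/
inductive DerivAC : P A V D → P A V D → Prop where
  | a1 : ∀ x y : P A V D, DerivAC (.alt x y) (.alt y x)
  | a2 : ∀ x y z : P A V D, DerivAC (.alt (.alt x y) z) (.alt x (.alt y z))
  | refl : ∀ p : P A V D, DerivAC p p
  | symm : ∀ {p q : P A V D}, DerivAC p q → DerivAC q p
  | trans : ∀ {p q r : P A V D}, DerivAC p q → DerivAC q r → DerivAC p r
  | altC : ∀ {p q p' q' : P A V D},
      DerivAC p q → DerivAC p' q' → DerivAC (.alt p p') (.alt q q')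
  | seqC : ∀ {p q p' q' : P A V D},
      DerivAC p q → DerivAC p' q' → DerivAC (.seq p p') (.seq q q')
  | iterC : ∀ {p q p' q' : P A V D},
      DerivAC p q → DerivAC p' q' → DerivAC (.iter p p') (.iter q q')
  | parC : ∀ {p q p' q' : P A V D},
      DerivAC p q → DerivAC p' q' → DerivAC (.par p p') (.par q q')
  | lmergeC : ∀ {p q p' q' : P A V D},
      DerivAC p q → DerivAC p' q' → DerivAC (.lmerge p p') (.lmerge q q')
  | cmergeC : ∀ {p q p' q' : P A V D},
      DerivAC p q → DerivAC p' q' → DerivAC (.cmerge p p') (.cmerge q q')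
  | encapC : ∀ {p q : P A V D} (H : Set A),
      DerivAC p q → DerivAC (.encap H p) (.encap H q)
  | gcC : ∀ {p q : P A V D} (φ : Cond V D),
      DerivAC p q → DerivAC (.gc φ p) (.gc φ q)
  | evalC : ∀ {p q : P A V D} (ρ : Val V D),
      DerivAC p q → DerivAC (.eval ρ p) (.eval ρ q)

/-- `t` is a summand of `t′` (`t ⊑ t′`) -/
def Summand (t t' : P A V D) : Prop :=
  (∃ t'' : P A V D, DerivAC (.alt t t'') t') ∨ DerivAC t t'

/-- head normal forms of deACPei -/
inductive HNF : P A V D → Prop where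
  | delta : HNF .delta
  | geps : ∀ φ : Cond V D, HNF (.gc φ .eps)
  | gact : ∀ (φ : Cond V D) (α : Atom A V D) (p : P A V D),
      HNF (.gc φ (.seq (.atom α) p))
  | alt : ∀ {p q : P A V D}, HNF p → HNF q → HNF (.alt p q)

/-- the assumptions of deACPei on the communication function: commutativity
and associativity (on `Act ∪ {δ}`) -/
def GammaOK (γ : A → A → Option A) : Prop :=
  (∀ a b, γ a b = γ b a) ∧
  (∀ a b c, (γ a b).bind (fun d => γ d c) = (γ b c).bind (fun d => γ a d))

/-- the terms of `RGProcTerm`: closed process terms in which the evaluation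
operators and the auxiliary operators left merge and communication merge do
not occur -/
def RGTerm : P A V D → Prop
  | .atom _ => True
  | .delta => True
  | .eps => True
  | .alt p q => RGTerm p ∧ RGTerm q
  | .seq p q => RGTerm p ∧ RGTerm q
  | .iter p q => RGTerm p ∧ RGTerm q
  | .par p q => RGTerm p ∧ RGTerm q
  | .lmerge _ _ => False
  | .cmerge _ _ => False
  | .encap _ p => RGTerm p
  | .gc _ p => RGTerm p
  | .eval _ _ => False

/-- the step relation `(p, ρ) —α→ (p′, ρ′)` -/
def RStep (γ : A → A → Option A) (p : P A V D) (ρ : Val V D) (α : Atom A V D)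
    (p' : P A V D) (ρ' : Val V D) : Prop :=
  ∀ ρ'' : Val V D, Step γ (.eval ρ p) ρ'' α (.eval ρ' p')

/-- labels of steps: atomic process terms or the environment label `e` -/
inductive Lab (A V D : Type) : Type where
  | act : Atom A V D → Lab A V D
  | env : Lab A V D

/-- the labelled step relation, including environment steps -/
def StepL (γ : A → A → Option A) (p : P A V D) (ρ : Val V D) (l : Lab A V D)
    (p' : P A V D) (ρ' : Val V D) : Prop :=
  match l with
  | .act α => RStep γ p ρ α p' ρ'
  | .env => p' = p

/-- finite computations: sequences of steps in the step relation -/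
structure Comp (γ : A → A → Option A) : Type where
  n : ℕ
  proc : ℕ → P A V D
  val : ℕ → Val V D
  lab : ℕ → Lab A V D
  step : ∀ i < n, StepL γ (proc i) (val i) (lab i) (proc (i + 1)) (val (i + 1))

/-- `σ` is a computation of `p` -/
def Comp.isOf {γ : A → A → Option A} (σ : Comp (A := A) (V := V) (D := D) γ)
    (p : P A V D) : Prop :=
  σ.proc 0 = p

/-- `σ` satisfies the assumptions `(φ, R)` -/
def asat {γ : A → A → Option A} (σ : Comp (A := A) (V := V) (D := D) γ)
    (φ : Cond V D) (R : Cond2 V D) : Prop :=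
  φ (σ.val 0) ∧
  ∀ i < σ.n, σ.lab i = .env → R (σ.val (i + 1)) (σ.val i)

/-- `σ` satisfies the commitments `(ψ, G)` -/
def csat {γ : A → A → Option A} (σ : Comp (A := A) (V := V) (D := D) γ)
    (ψ : Cond V D) (G : Cond2 V D) : Prop :=
  (σ.proc σ.n = .eps → ψ (σ.val σ.n)) ∧
  ∀ i < σ.n, σ.lab i ≠ .env → G (σ.val (i + 1)) (σ.val i)

/-- truth in the sense of partial correctness of an asserted process with
closed pre-, post-, rely- and guarantee-conditions -/
def PartialTrueC (γ : A → A → Option A) (R G : Cond2 V D) (φ : Cond V D)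
    (p : P A V D) (ψ : Cond V D) : Prop :=
  ∀ σ : Comp (A := A) (V := V) (D := D) γ, σ.isOf p → asat σ φ R → csat σ ψ G

/-- truth in the sense of partial correctness of an asserted process
`⟨R, G⟩ : {φ} p {ψ}`; the conditions may contain rigid (data) variables, whose
valuations are modelled by the parameter `z : Z`, and truth requires truth of
all closed substitution instances, i.e. quantification over all `z` -/
def PartialTrue (γ : A → A → Option A) {Z : Type*} (R G : Z → Cond2 V D)
    (φ : Z → Cond V D) (p : P A V D) (ψ : Z → Cond V D) : Prop :=
  ∀ z : Z, PartialTrueC γ (R z) (G z) (φ z) p (ψ z)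

/-- truth in the sense of partial correctness of a Hoare asserted process
`{φ} p {ψ}` (computations without environment steps) -/
def HoareTrue (γ : A → A → Option A) {Z : Type*} (φ : Z → Cond V D)
    (p : P A V D) (ψ : Z → Cond V D) : Prop :=
  ∀ z : Z, ∀ σ : Comp (A := A) (V := V) (D := D) γ, σ.isOf p →
    (∀ i < σ.n, σ.lab i ≠ Lab.env) →
    φ z (σ.val 0) → σ.proc σ.n = .eps → ψ z (σ.val σ.n)

/-- the flexible variable `v` occurs in the data term `e` -/
def ExprDep (e : Expr V D) (v : V) : Prop := ∃ ρ d, e (upd ρ v d) ≠ e ρ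

/-- the flexible variable `v` occurs in the condition `φ` -/
def CondDep (φ : Cond V D) (v : V) : Prop := ∃ ρ d, ¬ (φ (upd ρ v d) ↔ φ ρ)

/-- the flexible variable constant `v` or `prev v` occurs in the two-state
condition `R` -/
def Cond2Dep (R : Cond2 V D) (v : V) : Prop :=
  ∃ ρc ρp d, ¬ (R (upd ρc v d) ρp ↔ R ρc ρp) ∨ ¬ (R ρc (upd ρp v d) ↔ R ρc ρp)

/-- the set of flexible variables occurring in `φ` -/
def ExprDeps (e : Expr V D) : Set V := {v | ExprDep e v}

def CondDeps (φ : Cond V D) : Set V := {v | CondDep φ v}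

/-- the set `FVar` of flexible variables occurring in a family of one-state
conditions -/
def FVarC {Z : Type*} (φ : Z → Cond V D) : Set V := {v | ∃ z, CondDep (φ z) v}

/-- the set `FVar` of flexible variables occurring in a family of two-state
conditions -/
def FVar2 {Z : Type*} (R : Z → Cond2 V D) : Set V := {v | ∃ z, Cond2Dep (R z) v}

/-- `𝔇 ⊨ prev φ ∧ R ⟹ φ`: satisfaction of `φ` is preserved by steps
satisfying `R` -/
def Preserves {Z : Type*} (R : Z → Cond2 V D) (φ : Z → Cond V D) : Prop :=
  ∀ z ρc ρp, φ z ρp → R z ρc ρp → φ z ρc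

/-- the flexible variables from `A'` occur in the atomic process term only as
allowed for auxiliary variables -/
def AtomOK (A' : Set V) : Atom A V D → Prop
  | .basic _ => True
  | .param _ e es =>
      ExprDeps e ∩ A' = ∅ ∧ ∀ f ∈ es, ExprDeps f ∩ A' = ∅
  | .assign v e => v ∈ A' ∨ (v ∉ A' ∧ ExprDeps e ∩ A' = ∅)

/-- the flexible variables from `A'` occur in `p` only in subterms of the form
`v := e` with `v ∈ A'` -/
def NoAuxViolation (A' : Set V) : P A V D → Prop
  | .atom α => AtomOK A' α
  | .delta => True
  | .eps => True
  | .alt p q => NoAuxViolation A' p ∧ NoAuxViolation A' q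
  | .seq p q => NoAuxViolation A' p ∧ NoAuxViolation A' q
  | .iter p q => NoAuxViolation A' p ∧ NoAuxViolation A' q
  | .par p q => NoAuxViolation A' p ∧ NoAuxViolation A' q
  | .lmerge p q => NoAuxViolation A' p ∧ NoAuxViolation A' q
  | .cmerge p q => NoAuxViolation A' p ∧ NoAuxViolation A' q
  | .encap _ p => NoAuxViolation A' p
  | .gc φ p => CondDeps φ ∩ A' = ∅ ∧ NoAuxViolation A' p
  | .eval _ p => NoAuxViolation A' p

/-- the flexible variable `v` occurs in the process term `p` -/
def OccursIn (v : V) : P A V D → Prop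
  | .atom (.basic _) => False
  | .atom (.param _ e es) => ExprDep e v ∨ ∃ f ∈ es, ExprDep f v
  | .atom (.assign w e) => w = v ∨ ExprDep e v
  | .delta => False
  | .eps => False
  | .alt p q => OccursIn v p ∨ OccursIn v q
  | .seq p q => OccursIn v p ∨ OccursIn v q
  | .iter p q => OccursIn v p ∨ OccursIn v q
  | .par p q => OccursIn v p ∨ OccursIn v q
  | .lmerge p q => OccursIn v p ∨ OccursIn v q
  | .cmerge p q => OccursIn v p ∨ OccursIn v q
  | .encap _ p => OccursIn v p
  | .gc φ p => CondDep φ v ∨ OccursIn v p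
  | .eval _ p => OccursIn v p

/-- `A'` is a set of auxiliary variables of `p` (`A' ∈ AVars(p)`) -/
def AuxSet (A' : Set V) (p : P A V D) : Prop :=
  (∀ v ∈ A', OccursIn v p) ∧ NoAuxViolation A' p

/-- `p_{A'}`: `p` with all occurrences of subterms of the form `v := e` with
`v ∈ A'` replaced by `ε` -/
noncomputable def eraseAux (A' : Set V) : P A V D → P A V D
  | .atom (.assign v e) => if v ∈ A' then .eps else .atom (.assign v e)
  | .atom α => .atom α
  | .delta => .delta
  | .eps => .eps
  | .alt p q => .alt (eraseAux A' p) (eraseAux A' q)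
  | .seq p q => .seq (eraseAux A' p) (eraseAux A' q)
  | .iter p q => .iter (eraseAux A' p) (eraseAux A' q)
  | .par p q => .par (eraseAux A' p) (eraseAux A' q)
  | .lmerge p q => .lmerge (eraseAux A' p) (eraseAux A' q)
  | .cmerge p q => .cmerge (eraseAux A' p) (eraseAux A' q)
  | .encap H p => .encap H (eraseAux A' p)
  | .gc φ p => .gc φ (eraseAux A' p)
  | .eval ρ p => .eval ρ (eraseAux A' p)

/-- the axioms and rules of the rely/guarantee logic RG; the judgment
`RG γ Z R G φ p ψ` formalizes derivability of the asserted process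
`⟨R, G⟩ : {φ} p {ψ}`, where the conditions may contain rigid (data) variables
valued in `Z` -/
inductive RG (γ : A → A → Option A) (Z : Type) :
    (Z → Cond2 V D) → (Z → Cond2 V D) → (Z → Cond V D) → P A V D →
      (Z → Cond V D) → Prop where
  | inaction : ∀ {R G : Z → Cond2 V D} {φ ψ : Z → Cond V D},
      RG γ Z R G φ .delta ψ
  | empty : ∀ {R G : Z → Cond2 V D} {φ : Z → Cond V D},
      Preserves R φ → RG γ Z R G φ .eps φ
  | nonAssign : ∀ {R G : Z → Cond2 V D} {φ : Z → Cond V D} (α : Atom A V D),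
      ¬ α.isAssign →
      Preserves R φ →
      (∀ z ρc ρp, φ z ρp → (∀ v ∈ FVarC φ ∪ FVar2 G, ρc v = ρp v) →
        G z ρc ρp) →
      RG γ Z R G φ (.atom α) φ
  | assign : ∀ {R G : Z → Cond2 V D} {φ ψ : Z → Cond V D} (v : V) (e : Expr V D),
      (∀ z ρ, φ z ρ → ψ z (upd ρ v (e ρ))) →
      Preserves R φ → Preserves R ψ →
      (∀ z ρc ρp, φ z ρp → (ρc v = e ρp ∨ ρc v = ρp v) →
        (∀ w ∈ (FVarC φ ∪ FVar2 G) \ {v}, ρc w = ρp w) → G z ρc ρp) →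
      RG γ Z R G φ (.atom (.assign v e)) ψ
  | altI : ∀ {R G : Z → Cond2 V D} {φ ψ : Z → Cond V D} {p q : P A V D},
      RG γ Z R G φ p ψ → RG γ Z R G φ q ψ → RG γ Z R G φ (.alt p q) ψ
  | seqI : ∀ {R G : Z → Cond2 V D} {φ χ ψ : Z → Cond V D} {p q : P A V D},
      RG γ Z R G φ p χ → RG γ Z R G χ q ψ → RG γ Z R G φ (.seq p q) ψ
  | iterI : ∀ {R G : Z → Cond2 V D} {φ ψ : Z → Cond V D} {p q : P A V D},
      RG γ Z R G φ p φ → RG γ Z R G φ q ψ → RG γ Z R G φ (.iter p q) ψ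
  | gcI : ∀ {R G : Z → Cond2 V D} {φ ψ : Z → Cond V D} {p : P A V D}
      (χ : Cond V D),
      Preserves R φ →
      RG γ Z R G (fun z ρ => φ z ρ ∧ χ ρ) p ψ →
      RG γ Z R G φ (.gc χ p) ψ
  | parI : ∀ {R G' G'' : Z → Cond2 V D} {φ ψ' ψ'' : Z → Cond V D}
      {p q : P A V D},
      RG γ Z (fun z ρc ρp => R z ρc ρp ∨ G'' z ρc ρp) G' φ p ψ' →
      RG γ Z (fun z ρc ρp => R z ρc ρp ∨ G' z ρc ρp) G'' φ q ψ'' →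
      RG γ Z R (fun z ρc ρp => G' z ρc ρp ∨ G'' z ρc ρp) φ (.par p q)
        (fun z ρ => ψ' z ρ ∧ ψ'' z ρ)
  | encapI : ∀ {R G : Z → Cond2 V D} {φ ψ : Z → Cond V D} {p : P A V D}
      (H : Set A),
      RG γ Z R G φ p ψ → RG γ Z R G φ (.encap H p) ψ
  | auxI : ∀ {R R' G : Z → Cond2 V D} {φ φ' ψ : Z → Cond V D} {p : P A V D}
      (A' : Set V),
      Preserves R φ →
      (∀ (z : Z) (ρ : Val V D), ∃ ρ' : Val V D, (∀ v ∉ A', ρ' v = ρ v) ∧ φ' z ρ') →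
      (∀ (z : Z) (ρc ρp : Val V D), ∃ ρc' : Val V D, (∀ v ∉ A', ρc' v = ρc v) ∧ R' z ρc' ρp) →
      RG γ Z (fun z ρc ρp => R z ρc ρp ∧ R' z ρc ρp) G
        (fun z ρ => φ z ρ ∧ φ' z ρ) p ψ →
      AuxSet A' p →
      (FVarC φ ∪ FVarC ψ ∪ FVar2 R ∪ FVar2 G) ∩ A' = ∅ →
      RG γ Z R G φ (eraseAux A' p) ψ
  | conseq : ∀ {R R' G G' : Z → Cond2 V D} {φ φ' ψ ψ' : Z → Cond V D}
      {p : P A V D},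
      (∀ z ρ, φ z ρ → φ' z ρ) →
      (∀ z ρc ρp, R z ρc ρp → R' z ρc ρp) →
      (∀ z ρc ρp, G' z ρc ρp → G z ρc ρp) →
      (∀ z ρ, ψ' z ρ → ψ z ρ) →
      RG γ Z R' G' φ' p ψ' →
      RG γ Z R G φ p ψ

/-- computations `σ` of `p′ ∥ p″`, `σ′` of `p′` and `σ″` of `p″` conjoin
(`σ ∝ σ′ ∥ σ″`) -/
def Conjoin (γ : A → A → Option A)
    (σ σ' σ'' : Comp (A := A) (V := V) (D := D) γ) : Prop :=
  σ.n = σ'.n ∧ σ.n = σ''.n ∧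
  (∀ i ≤ σ.n, σ.proc i = .par (σ'.proc i) (σ''.proc i)) ∧
  (∀ i ≤ σ.n, σ.val i = σ'.val i ∧ σ.val i = σ''.val i) ∧
  ∀ i < σ.n,
    (σ'.lab i ≠ .env ∧ σ''.lab i = .env ∧ σ.lab i = σ'.lab i) ∨
    (σ'.lab i = .env ∧ σ''.lab i ≠ .env ∧ σ.lab i = σ''.lab i) ∨
    (σ'.lab i = .env ∧ σ''.lab i = .env ∧ σ.lab i = .env) ∨
    (∃ α' α'' β : Atom A V D, σ'.lab i = .act α' ∧ σ''.lab i = .act α'' ∧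
      σ.lab i = .act β ∧
      Deriv γ (.cmerge (.atom α') (.atom α'')) (.atom β))

/-- the atomic process term `α` occurs in the process term `p` -/
def OccursAtom (α : Atom A V D) : P A V D → Prop
  | .atom β => β = α
  | .delta => False
  | .eps => False
  | .alt p q => OccursAtom α p ∨ OccursAtom α q
  | .seq p q => OccursAtom α p ∨ OccursAtom α q
  | .iter p q => OccursAtom α p ∨ OccursAtom α q
  | .par p q => OccursAtom α p ∨ OccursAtom α q
  | .lmerge p q => OccursAtom α p ∨ OccursAtom α q
  | .cmerge p q => OccursAtom α p ∨ OccursAtom α q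
  | .encap _ p => OccursAtom α p
  | .gc _ p => OccursAtom α p
  | .eval _ p => OccursAtom α p

/-- possibly infinite computations -/
structure CompW (γ : A → A → Option A) : Type where
  len : ℕ∞
  proc : ℕ → P A V D
  val : ℕ → Val V D
  lab : ℕ → Lab A V D
  step : ∀ i : ℕ, (i : ℕ∞) < len →
    StepL γ (proc i) (val i) (lab i) (proc (i + 1)) (val (i + 1))

def CompW.isOf {γ : A → A → Option A} (σ : CompW (A := A) (V := V) (D := D) γ)
    (p : P A V D) : Prop :=
  σ.proc 0 = p

/-- `σ` satisfies the assumptions `(φ, R)` -/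
def asatW {γ : A → A → Option A} (σ : CompW (A := A) (V := V) (D := D) γ)
    (φ : Cond V D) (R : Cond2 V D) : Prop :=
  φ (σ.val 0) ∧
  ∀ i : ℕ, (i : ℕ∞) < σ.len → σ.lab i = .env → R (σ.val (i + 1)) (σ.val i)

/-- `σ` satisfies the commitments `(ψ, G)` -/
def csatW {γ : A → A → Option A} (σ : CompW (A := A) (V := V) (D := D) γ)
    (ψ : Cond V D) (G : Cond2 V D) : Prop :=
  (∀ n : ℕ, σ.len = (n : ℕ∞) → σ.proc n = .eps → ψ (σ.val n)) ∧
  ∀ i : ℕ, (i : ℕ∞) < σ.len → σ.lab i ≠ .env → G (σ.val (i + 1)) (σ.val i)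

/-- `σ` is convergent: it contains only finitely many non-environment steps -/
def Conv {γ : A → A → Option A}
    (σ : CompW (A := A) (V := V) (D := D) γ) : Prop :=
  {i : ℕ | (i : ℕ∞) < σ.len ∧ σ.lab i ≠ .env}.Finite

/-- a finite `σ` satisfies the enabledness-condition `θ` -/
def esat {γ : A → A → Option A} (σ : CompW (A := A) (V := V) (D := D) γ)
    (θ : Cond V D) : Prop :=
  ∀ n : ℕ, σ.len = (n : ℕ∞) → θ (σ.val n) →
    σ.proc n = .eps ∨
    ∃ (α : Atom A V D) (p' : P A V D) (ρ' : Val V D),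
      RStep γ (σ.proc n) (σ.val n) α p' ρ'

/-- the carrier of sort `Ord` of the data algebra: all ordinals `α` such that
`ω` is not smaller than `α` -/
abbrev OrdD : Type 1 := {o : Ordinal // o ≤ Ordinal.omega0}

/-- the axioms and rules of the rely/guarantee logic RG adapted to deadlock
freedom; the judgment `RGE γ Z R θ G φ p ψ` formalizes derivability of the
asserted process with enabledness-condition `⟨R, θ, G⟩ : {φ} p {ψ}` -/
inductive RGE (γ : A → A → Option A) : ∀ Z : Type 1,
    (Z → Cond2 V D) → (Z → Cond V D) → (Z → Cond2 V D) → (Z → Cond V D) →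
      P A V D → (Z → Cond V D) → Prop where
  | inaction : ∀ {Z : Type 1} {R G : Z → Cond2 V D} {φ ψ : Z → Cond V D},
      RGE γ Z R (fun _ _ => False) G φ .delta ψ
  | empty : ∀ {Z : Type 1} {R G : Z → Cond2 V D} {θ φ : Z → Cond V D},
      Preserves R φ → RGE γ Z R θ G φ .eps φ
  | nonAssign : ∀ {Z : Type 1} {R G : Z → Cond2 V D} {θ φ : Z → Cond V D}
      (α : Atom A V D),
      ¬ α.isAssign →
      Preserves R φ →
      (∀ z ρc ρp, φ z ρp → (∀ v ∈ FVarC φ ∪ FVar2 G, ρc v = ρp v) →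
        G z ρc ρp) →
      RGE γ Z R θ G φ (.atom α) φ
  | assign : ∀ {Z : Type 1} {R G : Z → Cond2 V D} {θ φ ψ : Z → Cond V D}
      (v : V) (e : Expr V D),
      (∀ z ρ, φ z ρ → ψ z (upd ρ v (e ρ))) →
      Preserves R φ → Preserves R ψ →
      (∀ z ρc ρp, φ z ρp → (ρc v = e ρp ∨ ρc v = ρp v) →
        (∀ w ∈ (FVarC φ ∪ FVar2 G) \ {v}, ρc w = ρp w) → G z ρc ρp) →
      RGE γ Z R θ G φ (.atom (.assign v e)) ψ
  | altI : ∀ {Z : Type 1} {R G : Z → Cond2 V D} {θ' θ'' φ ψ : Z → Cond V D}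
      {p q : P A V D},
      RGE γ Z R θ' G φ p ψ → RGE γ Z R θ'' G φ q ψ →
      RGE γ Z R (fun z ρ => θ' z ρ ∨ θ'' z ρ) G φ (.alt p q) ψ
  | seqI : ∀ {Z : Type 1} {R G : Z → Cond2 V D} {θ φ χ ψ : Z → Cond V D}
      {p q : P A V D},
      RGE γ Z R θ G φ p χ → RGE γ Z R θ G χ q ψ → RGE γ Z R θ G φ (.seq p q) ψ
  | iterI : ∀ {Z : Type 1} {R G : Z → Cond2 V D} {θ' θ'' ψ : Z → Cond V D}
      {p q : P A V D} (φ : Z → OrdD → Cond V D),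
      (∀ z (a : OrdD) ρc ρp, φ z a ρp → R z ρc ρp →
        ∃ a' : OrdD, a' ≤ a ∧ φ z a' ρc) →
      RGE γ (Z × OrdD) (fun w => R w.1) (fun w => θ' w.1) (fun w => G w.1)
        (fun w ρ => φ w.1 w.2 ρ ∧ 0 < w.2.val) p
        (fun w ρ => ∃ a' : OrdD, a' < w.2 ∧ φ w.1 a' ρ) →
      RGE γ Z R θ'' G (fun z ρ => φ z ⟨0, zero_le⟩ ρ) q ψ →
      RGE γ Z R (fun z ρ => θ' z ρ ∨ θ'' z ρ) G
        (fun z ρ => ∃ a : OrdD, φ z a ρ) (.iter p q) ψ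
  | gcI : ∀ {Z : Type 1} {R G : Z → Cond2 V D} {φ ψ : Z → Cond V D}
      {p : P A V D} (χ : Cond V D),
      Preserves R φ →
      RGE γ Z R (fun _ _ => True) G (fun z ρ => φ z ρ ∧ χ ρ) p ψ →
      RGE γ Z R (fun z ρ => φ z ρ → χ ρ) G φ (.gc χ p) ψ
  | parI : ∀ {Z : Type 1} {R G' G'' : Z → Cond2 V D}
      {θ θ' θ'' φ ψ' ψ'' : Z → Cond V D} {p q : P A V D},
      (∀ z ρ, ψ'' z ρ → θ' z ρ) →
      (∀ z ρ, ψ' z ρ → θ'' z ρ) →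
      (∀ z ρ, θ' z ρ ∨ θ'' z ρ) →
      RGE γ Z (fun z ρc ρp => R z ρc ρp ∨ G'' z ρc ρp)
        (fun z ρ => θ z ρ ∧ θ' z ρ) G' φ p ψ' →
      RGE γ Z (fun z ρc ρp => R z ρc ρp ∨ G' z ρc ρp)
        (fun z ρ => θ z ρ ∧ θ'' z ρ) G'' φ q ψ'' →
      RGE γ Z R θ (fun z ρc ρp => G' z ρc ρp ∨ G'' z ρc ρp) φ (.par p q)
        (fun z ρ => ψ' z ρ ∧ ψ'' z ρ)
  | encapI : ∀ {Z : Type 1} {R G : Z → Cond2 V D} {θ φ ψ : Z → Cond V D}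
      {p : P A V D} (H : Set A),
      RGE γ Z R θ G φ p ψ →
      (∀ a ∈ H, ¬ OccursAtom (.basic a) p) →
      RGE γ Z R θ G φ (.encap H p) ψ
  | auxI : ∀ {Z : Type 1} {R R' G : Z → Cond2 V D}
      {θ θ' φ φ' ψ : Z → Cond V D} {p : P A V D} (A' : Set V),
      Preserves R φ →
      (∀ (z : Z) (ρ : Val V D), ∃ ρ' : Val V D, (∀ v ∉ A', ρ' v = ρ v) ∧ φ' z ρ') →
      (∀ (z : Z) (ρc ρp : Val V D), ∃ ρc' : Val V D, (∀ v ∉ A', ρc' v = ρc v) ∧ R' z ρc' ρp) →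
      (∀ (z : Z) (ρ : Val V D), ∃ ρ' : Val V D, (∀ v ∉ A', ρ' v = ρ v) ∧ θ' z ρ') →
      RGE γ Z (fun z ρc ρp => R z ρc ρp ∧ R' z ρc ρp)
        (fun z ρ => θ z ρ ∧ θ' z ρ) G (fun z ρ => φ z ρ ∧ φ' z ρ) p ψ →
      AuxSet A' p →
      (FVarC φ ∪ FVarC ψ ∪ FVarC θ ∪ FVar2 R ∪ FVar2 G) ∩ A' = ∅ →
      RGE γ Z R θ G φ (eraseAux A' p) ψ
  | conseq : ∀ {Z : Type 1} {R R' G G' : Z → Cond2 V D}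
      {θ θ' φ φ' ψ ψ' : Z → Cond V D} {p : P A V D},
      (∀ z ρ, φ z ρ → φ' z ρ) →
      (∀ z ρc ρp, R z ρc ρp → R' z ρc ρp) →
      (∀ z ρ, θ z ρ → θ' z ρ) →
      (∀ z ρc ρp, G' z ρc ρp → G z ρc ρp) →
      (∀ z ρ, ψ' z ρ → ψ z ρ) →
      RGE γ Z R' θ' G' φ' p ψ' →
      RGE γ Z R θ G φ p ψ

/-- truth in the sense of weak total correctness of an asserted process with
enabledness-condition `⟨R, θ, G⟩ : {φ} p {ψ}` -/
def WTTrueE (γ : A → A → Option A) {Z : Type*} (R : Z → Cond2 V D)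
    (θ : Z → Cond V D) (G : Z → Cond2 V D) (φ : Z → Cond V D) (p : P A V D)
    (ψ : Z → Cond V D) : Prop :=
  ∀ z : Z, ∀ σ : CompW (A := A) (V := V) (D := D) γ, σ.isOf p →
    asatW σ (φ z) (R z) →
    Conv σ ∧ esat σ (θ z) ∧ csatW σ (ψ z) (G z)

end DeACPei
namespace DeACPei

section HNFLemmas

variable {A V D : Type} {γ : A → A → Option A}

/-- guarded head normal forms: no `φ :→ ε` summands -/
inductive GHNF : P A V D → Prop where
  | delta : GHNF .delta
  | gact : ∀ (φ : Cond V D) (α : Atom A V D) (p : P A V D),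
      GHNF (.gc φ (.seq (.atom α) p))
  | alt : ∀ {p q : P A V D}, GHNF p → GHNF q → GHNF (.alt p q)

/-- normalized head normal forms: no `δ` summands (replaced by `False :→ ε`) -/
inductive HNF2 : P A V D → Prop where
  | geps : ∀ φ : Cond V D, HNF2 (.gc φ .eps)
  | gact : ∀ (φ : Cond V D) (α : Atom A V D) (p : P A V D),
      HNF2 (.gc φ (.seq (.atom α) p))
  | alt : ∀ {p q : P A V D}, HNF2 p → HNF2 q → HNF2 (.alt p q)

lemma GHNF.toHNF {p : P A V D} (h : GHNF p) : HNF p := by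
  induction h with
  | delta => exact .delta
  | gact φ α p => exact .gact φ α p
  | alt _ _ ih1 ih2 => exact .alt ih1 ih2

lemma HNF2.toHNF {p : P A V D} (h : HNF2 p) : HNF p := by
  induction h with
  | geps φ => exact .geps φ
  | gact φ α p => exact .gact φ α p
  | alt _ _ ih1 ih2 => exact .alt ih1 ih2

/-- every HNF is derivably equal to a normalized HNF -/
lemma hnf_norm {h : P A V D} (hh : HNF h) :
    ∃ k : P A V D, HNF2 k ∧ Deriv γ h k := by
  induction hh with
  | delta =>
      exact ⟨.gc (fun _ => False) .eps, .geps _, .symm (.ax (.gc2 .eps))⟩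
  | geps φ => exact ⟨_, .geps φ, .refl _⟩
  | gact φ α p => exact ⟨_, .gact φ α p, .refl _⟩
  | alt _ _ ih1 ih2 =>
      obtain ⟨k1, hk1, d1⟩ := ih1
      obtain ⟨k2, hk2, d2⟩ := ih2
      exact ⟨.alt k1 k2, .alt hk1 hk2, .altC d1 d2⟩

/-- guarded command applied to an HNF has an HNF -/
lemma hnf_gc (φ : Cond V D) {h : P A V D} (hh : HNF h) :
    ∃ r : P A V D, HNF r ∧ Deriv γ (.gc φ h) r := by
  induction hh with
  | delta => exact ⟨.delta, .delta, .ax (.gc3 φ)⟩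
  | geps ψ => exact ⟨_, .geps _, .ax (.gc6 φ ψ _)⟩
  | gact ψ α p => exact ⟨_, .gact _ α p, .ax (.gc6 φ ψ _)⟩
  | alt _ _ ih1 ih2 =>
      obtain ⟨r1, hr1, d1⟩ := ih1
      obtain ⟨r2, hr2, d2⟩ := ih2
      exact ⟨.alt r1 r2, .alt hr1 hr2,
        (Deriv.ax (.gc4 φ _ _)).trans (.altC d1 d2)⟩

/-- sequential composition of a guarded HNF with anything has an HNF -/
lemma hnf_gseq {g : P A V D} (hg : GHNF g) (t : P A V D) :
    ∃ r : P A V D, HNF r ∧ Deriv γ (.seq g t) r := by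
  induction hg with
  | delta => exact ⟨.delta, .delta, .ax (.a7 t)⟩
  | gact φ α p =>
      exact ⟨.gc φ (.seq (.atom α) (.seq p t)), .gact _ _ _,
        (Deriv.symm (.ax (.gc5 φ _ t))).trans (.gcC φ (.ax (.a5 _ _ _)))⟩
  | alt _ _ ih1 ih2 =>
      obtain ⟨r1, hr1, d1⟩ := ih1
      obtain ⟨r2, hr2, d2⟩ := ih2
      exact ⟨.alt r1 r2, .alt hr1 hr2,
        (Deriv.ax (.a4 _ _ t)).trans (.altC d1 d2)⟩

/-- sequential composition of an HNF with a term having an HNF has an HNF -/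
lemma hnf_seq {h t k : P A V D} (hh : HNF h) (hk : HNF k)
    (dtk : Deriv γ t k) :
    ∃ r : P A V D, HNF r ∧ Deriv γ (.seq h t) r := by
  induction hh with
  | delta => exact ⟨.delta, .delta, .ax (.a7 t)⟩
  | geps φ =>
      obtain ⟨r, hr, dr⟩ := hnf_gc (γ := γ) φ hk
      refine ⟨r, hr, ?_⟩
      exact (Deriv.symm (.ax (.gc5 φ .eps t))).trans
        ((Deriv.gcC φ ((Deriv.ax (.a9 t)).trans dtk)).trans dr)
  | gact φ α p =>
      exact ⟨.gc φ (.seq (.atom α) (.seq p t)), .gact _ _ _,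
        (Deriv.symm (.ax (.gc5 φ _ t))).trans (.gcC φ (.ax (.a5 _ _ _)))⟩
  | alt _ _ ih1 ih2 =>
      obtain ⟨r1, hr1, d1⟩ := ih1
      obtain ⟨r2, hr2, d2⟩ := ih2
      exact ⟨.alt r1 r2, .alt hr1 hr2,
        (Deriv.ax (.a4 _ _ t)).trans (.altC d1 d2)⟩

/-- `ε = (ψ :→ ε) + ε` -/
lemma eps_absorb (ψ : Cond V D) :
    Deriv γ (P.eps : P A V D) (.alt (.gc ψ .eps) .eps) := by
  have hc : (fun ρ => ψ ρ ∨ True) = (fun _ : Val V D => True) := by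
    funext ρ; simp
  have h1 : Deriv γ (P.eps : P A V D)
      (.gc (fun ρ => ψ ρ ∨ True) (P.eps : P A V D)) := by
    rw [hc]; exact .symm (.ax (.gc1 _))
  exact h1.trans ((Deriv.ax (.gc7 ψ (fun _ => True) .eps)).trans
    (.altC (.refl _) (.ax (.gc1 _))))

/-- a `ψ :→ ε` summand can be dropped from the left argument of iteration -/
lemma iter_drop_eps (x : P A V D) (ψ : Cond V D) (y : P A V D) :
    Deriv γ (.iter (.alt x (.gc ψ .eps)) y) (.iter x y) := by
  have h1 : Deriv γ (.iter (.alt x (.gc ψ .eps)) y)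
      (.iter (.alt (.alt x (.gc ψ .eps)) .eps) y) :=
    .symm (.ax (.bks5 _ y))
  have h2 : Deriv γ (.alt (.alt x (.gc ψ .eps)) (P.eps : P A V D))
      (.alt x .eps) :=
    (Deriv.ax (.a2 _ _ _)).trans (.altC (.refl x) (.symm (eps_absorb ψ)))
  exact h1.trans ((Deriv.iterC h2 (.refl y)).trans (.ax (.bks5 x y)))

lemma altAC1 (x h1 g2 : P A V D) :
    Deriv γ (.alt (.alt x h1) g2) (.alt (.alt x g2) h1) :=
  (Deriv.ax (.a2 _ _ _)).trans
    ((Deriv.altC (.refl x) (.ax (.a1 _ _))).trans (.symm (.ax (.a2 _ _ _))))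

lemma altAC2 (x g1 g2 : P A V D) :
    Deriv γ (.alt (.alt x g2) g1) (.alt x (.alt g1 g2)) :=
  (Deriv.ax (.a2 _ _ _)).trans (.altC (.refl x) (.ax (.a1 _ _)))

/-- inside iteration, an HNF can be replaced by a guarded HNF -/
lemma iter_clean {h : P A V D} (hh : HNF h) :
    ∃ g : P A V D, GHNF g ∧
      ∀ x y : P A V D, Deriv γ (.iter (.alt x h) y) (.iter (.alt x g) y) := by
  induction hh with
  | delta => exact ⟨.delta, .delta, fun _ _ => .refl _⟩
  | geps φ =>
      refine ⟨.delta, .delta, fun x y => ?_⟩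
      exact (iter_drop_eps x φ y).trans
        (.iterC (.symm (.ax (.a6 x))) (.refl y))
  | gact φ α p => exact ⟨_, .gact φ α p, fun _ _ => .refl _⟩
  | alt _ _ ih1 ih2 =>
      obtain ⟨g1, hg1, d1⟩ := ih1
      obtain ⟨g2, hg2, d2⟩ := ih2
      refine ⟨.alt g1 g2, .alt hg1 hg2, fun x y => ?_⟩
      exact (Deriv.iterC (.symm (.ax (.a2 _ _ _))) (.refl y)).trans
        ((d2 _ y).trans
          ((Deriv.iterC (altAC1 _ _ _) (.refl y)).trans
            ((d1 _ y).trans (Deriv.iterC (altAC2 _ _ _) (.refl y)))))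

/-- left merge of a normalized HNF with anything has an HNF -/
lemma hnf_lmerge {h : P A V D} (hh : HNF2 h) (t : P A V D) :
    ∃ r : P A V D, HNF r ∧ Deriv γ (.lmerge h t) r := by
  induction hh with
  | geps φ =>
      exact ⟨.delta, .delta,
        (Deriv.ax (.gc8 φ .eps t)).trans
          ((Deriv.gcC φ (.ax (.cm2e t))).trans (.ax (.gc3 φ)))⟩
  | gact φ α p =>
      exact ⟨.gc φ (.seq (.atom α) (.par p t)), .gact _ _ _,
        (Deriv.ax (.gc8 φ _ t)).trans (.gcC φ (.ax (.cm3 (some α) p t)))⟩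
  | alt _ _ ih1 ih2 =>
      obtain ⟨r1, hr1, d1⟩ := ih1
      obtain ⟨r2, hr2, d2⟩ := ih2
      exact ⟨.alt r1 r2, .alt hr1 hr2,
        (Deriv.ax (.cm4 _ _ t)).trans (.altC d1 d2)⟩

/-- communication merge of two action prefixes has an HNF -/
lemma cmerge_atoms (α β : Atom A V D) (p q : P A V D) :
    ∃ r : P A V D, HNF r ∧
      Deriv γ (.cmerge (.seq (.atom α) p) (.seq (.atom β) q)) r := by
  cases α with
  | basic a =>
      cases β with
      | basic b =>
          have h : Deriv γ
              (.cmerge (.seq (.atom (.basic a)) p) (.seq (.atom (.basic b)) q))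
              (.seq (ofOptA (γ a b)) (.par p q)) := .ax (.cm7 (some a) (some b) p q)
          cases hab : γ a b with
          | none =>
              rw [hab] at h
              exact ⟨.delta, .delta, h.trans (.ax (.a7 _))⟩
          | some c =>
              rw [hab] at h
              exact ⟨.gc (fun _ => True) (.seq (.atom (.basic c)) (.par p q)),
                .gact _ _ _, h.trans (.symm (.ax (.gc1 _)))⟩
      | param b f fs =>
          exact ⟨.delta, .delta,
            .ax (.cm7dd (some (.basic a)) p q (by intro _ _ _ hc; simp at hc))⟩
      | assign v e =>
          exact ⟨.delta, .delta, .ax (.cm7df (some (.basic a)) p q)⟩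
  | param a e es =>
      cases β with
      | basic b =>
          exact ⟨.delta, .delta,
            .ax (.cm7dc (some (.basic b)) p q (by intro _ _ _ hc; simp at hc))⟩
      | param b f fs =>
          cases hab : γ a b with
          | none => exact ⟨.delta, .delta, .ax (.cm7db p q (Or.inl hab))⟩
          | some c =>
              by_cases hl : es.length = fs.length
              · exact ⟨_, .gact _ _ _, .ax (.cm7da p q hab hl)⟩
              · exact ⟨.delta, .delta, .ax (.cm7db p q (Or.inr hl))⟩
      | assign w f =>
          exact ⟨.delta, .delta, .ax (.cm7df (some (.param a e es)) p q)⟩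
  | assign v e => exact ⟨.delta, .delta, .ax (.cm7de (some β) p q)⟩

/-- communication merge of an action prefix with a normalized HNF -/
lemma cmerge_right (φ : Cond V D) (α : Atom A V D) (p : P A V D)
    {k : P A V D} (hk : HNF2 k) :
    ∃ r : P A V D, HNF r ∧
      Deriv γ (.cmerge (.gc φ (.seq (.atom α) p)) k) r := by
  induction hk with
  | geps ψ =>
      exact ⟨.delta, .delta,
        (Deriv.ax (.gc10 ψ _ .eps)).trans
          ((Deriv.gcC ψ (.ax (.cm6e _))).trans (.ax (.gc3 ψ)))⟩
  | gact ψ β q =>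
      obtain ⟨r0, hr0, d0⟩ := cmerge_atoms (γ := γ) α β p q
      obtain ⟨r, hr, dr⟩ := hnf_gc (γ := γ) (fun ρ => φ ρ ∧ ψ ρ) hr0
      refine ⟨r, hr, ?_⟩
      have h1 : Deriv γ (.cmerge (.gc φ (.seq (.atom α) p))
            (.gc ψ (.seq (.atom β) q)))
          (.gc φ (.cmerge (.seq (.atom α) p) (.gc ψ (.seq (.atom β) q)))) :=
        .ax (.gc9 φ _ _)
      have h2 : Deriv γ
          (.gc φ (.cmerge (.seq (.atom α) p) (.gc ψ (.seq (.atom β) q))))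
          (.gc φ (.gc ψ (.cmerge (.seq (.atom α) p) (.seq (.atom β) q)))) :=
        .gcC φ (.ax (.gc10 ψ _ _))
      exact h1.trans (h2.trans ((Deriv.ax (.gc6 φ ψ _)).trans
        ((Deriv.gcC _ d0).trans dr)))
  | alt _ _ ih1 ih2 =>
      obtain ⟨r1, hr1, d1⟩ := ih1
      obtain ⟨r2, hr2, d2⟩ := ih2
      exact ⟨.alt r1 r2, .alt hr1 hr2,
        (Deriv.ax (.cm9 _ _ _)).trans (.altC d1 d2)⟩

/-- communication merge of two normalized HNFs has an HNF -/
lemma hnf_cmerge {h k : P A V D} (hh : HNF2 h) (hk : HNF2 k) :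
    ∃ r : P A V D, HNF r ∧ Deriv γ (.cmerge h k) r := by
  induction hh with
  | geps φ =>
      exact ⟨.delta, .delta,
        (Deriv.ax (.gc9 φ .eps k)).trans
          ((Deriv.gcC φ (.ax (.cm5e k))).trans (.ax (.gc3 φ)))⟩
  | gact φ α p => exact cmerge_right φ α p hk
  | alt _ _ ih1 ih2 =>
      obtain ⟨r1, hr1, d1⟩ := ih1
      obtain ⟨r2, hr2, d2⟩ := ih2
      exact ⟨.alt r1 r2, .alt hr1 hr2,
        (Deriv.ax (.cm8 _ _ k)).trans (.altC d1 d2)⟩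

/-- encapsulation of a normalized HNF has an HNF -/
lemma hnf_encap (H : Set A) {h : P A V D} (hh : HNF2 h) :
    ∃ r : P A V D, HNF r ∧ Deriv γ (.encap H h) r := by
  induction hh with
  | geps φ =>
      exact ⟨.gc φ .eps, .geps φ,
        (Deriv.ax (.gc11 H φ .eps)).trans (.gcC φ (.ax (.d0 H)))⟩
  | gact φ α p =>
      have h1 : Deriv γ (.encap H (.gc φ (.seq (.atom α) p)))
          (.gc φ (.seq (.encap H (.atom α)) (.encap H p))) :=
        (Deriv.ax (.gc11 H φ _)).trans (.gcC φ (.ax (.d4 H _ p)))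
      cases α with
      | basic a =>
          by_cases ha : a ∈ H
          · exact ⟨.delta, .delta, h1.trans
              ((Deriv.gcC φ ((Deriv.seqC (.ax (.d2 ha)) (.refl _)).trans
                (.ax (.a7 _)))).trans (.ax (.gc3 φ)))⟩
          · exact ⟨.gc φ (.seq (.atom (.basic a)) (.encap H p)), .gact _ _ _,
              h1.trans (.gcC φ (.seqC (.ax (.d1 ha)) (.refl _)))⟩
      | param a e es =>
          by_cases ha : a ∈ H
          · exact ⟨.delta, .delta, h1.trans
              ((Deriv.gcC φ ((Deriv.seqC (.ax (.d2d ha)) (.refl _)).trans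
                (.ax (.a7 _)))).trans (.ax (.gc3 φ)))⟩
          · exact ⟨.gc φ (.seq (.atom (.param a e es)) (.encap H p)), .gact _ _ _,
              h1.trans (.gcC φ (.seqC (.ax (.d1da ha)) (.refl _)))⟩
      | assign v e =>
          exact ⟨.gc φ (.seq (.atom (.assign v e)) (.encap H p)), .gact _ _ _,
            h1.trans (.gcC φ (.seqC (.ax (.d1db H v e)) (.refl _)))⟩
  | alt _ _ ih1 ih2 =>
      obtain ⟨r1, hr1, d1⟩ := ih1
      obtain ⟨r2, hr2, d2⟩ := ih2
      exact ⟨.alt r1 r2, .alt hr1 hr2,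
        (Deriv.ax (.d3 H _ _)).trans (.altC d1 d2)⟩

/-- evaluation of a normalized HNF has an HNF -/
lemma hnf_eval (ρ : Val V D) {h : P A V D} (hh : HNF2 h) :
    ∃ r : P A V D, HNF r ∧ Deriv γ (.eval ρ h) r := by
  induction hh with
  | geps φ =>
      exact ⟨.gc (fun _ => φ ρ) .eps, .geps _,
        (Deriv.ax (.v5 ρ φ .eps)).trans (.gcC _ (.ax (.v0 ρ)))⟩
  | gact φ α p =>
      have h1 : Deriv γ (.eval ρ (.gc φ (.seq (.atom α) p)))
          (.gc (fun _ => φ ρ) (.eval ρ (.seq (.atom α) p))) :=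
        .ax (.v5 ρ φ _)
      cases α with
      | basic a =>
          exact ⟨.gc (fun _ => φ ρ) (.seq (.atom (.basic a)) (.eval ρ p)),
            .gact _ _ _, h1.trans (.gcC _ (.ax (.v1 ρ (some a) p)))⟩
      | param a e es =>
          exact ⟨.gc (fun _ => φ ρ)
              (.seq (.atom (.param a (constE (e ρ)) (es.map fun f => constE (f ρ))))
                (.eval ρ p)),
            .gact _ _ _, h1.trans (.gcC _ (.ax (.v2 ρ a e es p)))⟩
      | assign v e =>
          exact ⟨.gc (fun _ => φ ρ)
              (.seq (.atom (.assign v (constE (e ρ)))) (.eval (upd ρ v (e ρ)) p)),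
            .gact _ _ _, h1.trans (.gcC _ (.ax (.v3 ρ v e p)))⟩
  | alt _ _ ih1 ih2 =>
      obtain ⟨r1, hr1, d1⟩ := ih1
      obtain ⟨r2, hr2, d2⟩ := ih2
      exact ⟨.alt r1 r2, .alt hr1 hr2,
        (Deriv.ax (.v4 ρ _ _)).trans (.altC d1 d2)⟩

end HNFLemmas

/-- Lemma 1 of the paper: for every closed term `p` of sort
`Proc` of deACPei, there exists a head normal form `q` such that the equation
`p = q` is derivable from the axioms of deACPei. -/
theorem exists_head_normal_form {A V D : Type} [Finite A] [Countable V]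
    [Nonempty D] (γ : A → A → Option A) (hγ : GammaOK γ) :
    ∀ p : P A V D, ∃ q : P A V D, HNF q ∧ Deriv γ p q := by
  intro p
  induction p with
  | atom α =>
      exact ⟨.gc (fun _ => True) (.seq (.atom α) .eps), .gact _ _ _,
        (Deriv.symm (.ax (.a8 _))).trans (.symm (.ax (.gc1 _)))⟩
  | delta => exact ⟨.delta, .delta, .refl _⟩
  | eps => exact ⟨.gc (fun _ => True) .eps, .geps _, .symm (.ax (.gc1 _))⟩
  | alt p q ihp ihq =>
      obtain ⟨hp, hhp, dp⟩ := ihp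
      obtain ⟨hq, hhq, dq⟩ := ihq
      exact ⟨.alt hp hq, .alt hhp hhq, .altC dp dq⟩
  | seq p q ihp ihq =>
      obtain ⟨hp, hhp, dp⟩ := ihp
      obtain ⟨hq, hhq, dq⟩ := ihq
      obtain ⟨r, hr, dr⟩ := hnf_seq (γ := γ) hhp hhq dq
      exact ⟨r, hr, (Deriv.seqC dp (.refl q)).trans dr⟩
  | iter p q ihp ihq =>
      obtain ⟨hp, hhp, dp⟩ := ihp
      obtain ⟨hq, hhq, dq⟩ := ihq
      obtain ⟨g, hg, dg⟩ := iter_clean (γ := γ) hhp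
      obtain ⟨r, hr, dr⟩ := hnf_gseq (γ := γ) hg (.iter g hq)
      have d0 : Deriv γ hp (.alt .delta hp) :=
        .symm ((Deriv.ax (.a1 _ _)).trans (.ax (.a6 _)))
      have dge : Deriv γ (.alt P.delta g) g :=
        (Deriv.ax (.a1 _ _)).trans (.ax (.a6 _))
      have d1 : Deriv γ (.iter p q) (.iter g hq) :=
        (Deriv.iterC (dp.trans d0) dq).trans
          ((dg .delta hq).trans (.iterC dge (.refl _)))
      exact ⟨.alt r hq, .alt hr hhq,
        d1.trans ((Deriv.ax (.bks1 g hq)).trans (.altC dr (.refl _)))⟩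
  | par p q ihp ihq =>
      obtain ⟨hp, hhp, dp⟩ := ihp
      obtain ⟨hq, hhq, dq⟩ := ihq
      obtain ⟨np, hnp, dnp⟩ := hnf_norm (γ := γ) hhp
      obtain ⟨nq, hnq, dnq⟩ := hnf_norm (γ := γ) hhq
      have dpn : Deriv γ p np := dp.trans dnp
      have dqn : Deriv γ q nq := dq.trans dnq
      obtain ⟨r1, hr1, d1⟩ := hnf_lmerge (γ := γ) hnp q
      obtain ⟨r2, hr2, d2⟩ := hnf_lmerge (γ := γ) hnq p
      obtain ⟨r3, hr3, d3⟩ := hnf_cmerge (γ := γ) hnp hnq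
      obtain ⟨k1, hk1, e1⟩ := hnf_encap (γ := γ) Set.univ hnp
      obtain ⟨k2, hk2, e2⟩ := hnf_encap (γ := γ) Set.univ hnq
      have ep : Deriv γ (.encap Set.univ p) k1 :=
        (Deriv.encapC _ dpn).trans e1
      have eq2 : Deriv γ (.encap Set.univ q) k2 :=
        (Deriv.encapC _ dqn).trans e2
      obtain ⟨r4, hr4, d4⟩ := hnf_seq (γ := γ) hk1 hk2 eq2
      refine ⟨.alt (.alt (.alt r1 r2) r3) r4,
        .alt (.alt (.alt hr1 hr2) hr3) hr4, ?_⟩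
      refine (Deriv.ax (.cm1e p q)).trans (.altC (.altC (.altC ?_ ?_) ?_) ?_)
      · exact (Deriv.lmergeC dpn (.refl q)).trans d1
      · exact (Deriv.lmergeC dqn (.refl p)).trans d2
      · exact (Deriv.cmergeC dpn dqn).trans d3
      · exact (Deriv.seqC ep (.refl _)).trans d4
  | lmerge p q ihp _ =>
      obtain ⟨hp, hhp, dp⟩ := ihp
      obtain ⟨np, hnp, dnp⟩ := hnf_norm (γ := γ) hhp
      obtain ⟨r, hr, dr⟩ := hnf_lmerge (γ := γ) hnp q
      exact ⟨r, hr, (Deriv.lmergeC (dp.trans dnp) (.refl q)).trans dr⟩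
  | cmerge p q ihp ihq =>
      obtain ⟨hp, hhp, dp⟩ := ihp
      obtain ⟨hq, hhq, dq⟩ := ihq
      obtain ⟨np, hnp, dnp⟩ := hnf_norm (γ := γ) hhp
      obtain ⟨nq, hnq, dnq⟩ := hnf_norm (γ := γ) hhq
      obtain ⟨r, hr, dr⟩ := hnf_cmerge (γ := γ) hnp hnq
      exact ⟨r, hr, (Deriv.cmergeC (dp.trans dnp) (dq.trans dnq)).trans dr⟩
  | encap H p ihp =>
      obtain ⟨hp, hhp, dp⟩ := ihp
      obtain ⟨np, hnp, dnp⟩ := hnf_norm (γ := γ) hhp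
      obtain ⟨r, hr, dr⟩ := hnf_encap (γ := γ) H hnp
      exact ⟨r, hr, (Deriv.encapC H (dp.trans dnp)).trans dr⟩
  | gc φ p ihp =>
      obtain ⟨hp, hhp, dp⟩ := ihp
      obtain ⟨r, hr, dr⟩ := hnf_gc (γ := γ) φ hhp
      exact ⟨r, hr, (Deriv.gcC φ dp).trans dr⟩
  | eval ρ p ihp =>
      obtain ⟨hp, hhp, dp⟩ := ihp
      obtain ⟨np, hnp, dnp⟩ := hnf_norm (γ := γ) hhp
      obtain ⟨r, hr, dr⟩ := hnf_eval (γ := γ) ρ hnp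
      exact ⟨r, hr, (Deriv.evalC ρ (dp.trans dnp)).trans dr⟩

end DeACPei
end

section
/- Bisimulation equivalence on closed process terms of deACPei is a congruence with respect to all operators of deACPei whose result sort is Proc and that have at least one argument of sort Proc: for all closed process terms t1, t1′, t2, t2′ and every closed condition term φ, if t1 ↔ t2 and t1′ ↔ t2′, then t1 + t1′ ↔ t2 + t2′, t1 · t1′ ↔ t2 · t2′, t1 ⋆ t1′ ↔ t2 ⋆ t2′, t1 ∥ t1′ ↔ t2 ∥ t2′, t1 ⌊⌊ t1′ ↔ t2 ⌊⌊ t2′, t1 | t1′ ↔ t2 | t2′, ∂_H(t1) ↔ ∂_H(t2), φ :→ t1 ↔ φ :→ t2, and V_σ(t1) ↔ V_σ(t2) for every flexible variable valuation σ. -/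
namespace DeACPei

variable {A V D : Type}

/-- symmetry of bisimulation equivalence -/
lemma Bisim.symmB {γ : A → A → Option A} {t1 t2 : P A V D}
    (h : Bisim γ t1 t2) : Bisim γ t2 t1 := by
  obtain ⟨R, hR, h12⟩ := h
  refine ⟨fun a b => R b a, ?_, h12⟩
  intro a b hab
  obtain ⟨fwd, bwd, tm⟩ := hR b a hab
  exact ⟨bwd, fwd, fun ρ => (tm ρ).symm⟩

/-- the closure of bisimulation equivalence under the operators of deACPei -/
inductive CC (γ : A → A → Option A) : P A V D → P A V D → Prop where
  | base : ∀ {x y : P A V D}, Bisim γ x y → CC γ x y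
  | alt : ∀ {x y x' y' : P A V D},
      CC γ x x' → CC γ y y' → CC γ (.alt x y) (.alt x' y')
  | seq : ∀ {x y x' y' : P A V D},
      CC γ x x' → CC γ y y' → CC γ (.seq x y) (.seq x' y')
  | iter : ∀ {x y x' y' : P A V D},
      CC γ x x' → CC γ y y' → CC γ (.iter x y) (.iter x' y')
  | par : ∀ {x y x' y' : P A V D},
      CC γ x x' → CC γ y y' → CC γ (.par x y) (.par x' y')
  | lmerge : ∀ {x y x' y' : P A V D},
      CC γ x x' → CC γ y y' → CC γ (.lmerge x y) (.lmerge x' y')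
  | cmerge : ∀ {x y x' y' : P A V D},
      CC γ x x' → CC γ y y' → CC γ (.cmerge x y) (.cmerge x' y')
  | encap : ∀ {x y : P A V D} (H : Set A),
      CC γ x y → CC γ (.encap H x) (.encap H y)
  | gc : ∀ {x y : P A V D} (φ : Cond V D),
      CC γ x y → CC γ (.gc φ x) (.gc φ y)
  | eval : ∀ {x y : P A V D} (ρ : Val V D),
      CC γ x y → CC γ (.eval ρ x) (.eval ρ y)

lemma CC.symmC {γ : A → A → Option A} {t1 t2 : P A V D}
    (h : CC γ t1 t2) : CC γ t2 t1 := by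
  induction h with
  | base hb => exact .base hb.symmB
  | alt _ _ ih1 ih2 => exact .alt ih1 ih2
  | seq _ _ ih1 ih2 => exact .seq ih1 ih2
  | iter _ _ ih1 ih2 => exact .iter ih1 ih2
  | par _ _ ih1 ih2 => exact .par ih1 ih2
  | lmerge _ _ ih1 ih2 => exact .lmerge ih1 ih2
  | cmerge _ _ ih1 ih2 => exact .cmerge ih1 ih2
  | encap H _ ih => exact .encap H ih
  | gc φ _ ih => exact .gc φ ih
  | eval ρ _ ih => exact .eval ρ ih

lemma f2_comp3 {ρ : Val V D} {es es' es2 es2' : List (Expr V D)}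
    (h1 : List.Forall₂ (fun f g : Expr V D => ∀ σ, f σ = g σ) es es2)
    (h2 : List.Forall₂ (fun f g : Expr V D => f ρ = g ρ) es es')
    (h3 : List.Forall₂ (fun f g : Expr V D => ∀ σ, f σ = g σ) es' es2') :
    List.Forall₂ (fun f g : Expr V D => f ρ = g ρ) es2 es2' := by
  induction h2 generalizing es2 es2' with
  | nil => cases h1; cases h3; exact .nil
  | @cons a b l1 l2 hab _ ih =>
      cases h1 with
      | cons ha1 ht1 =>
          cases h3 with
          | cons hb3 ht3 =>
              exact .cons (by rw [← ha1 ρ, ← hb3 ρ]; exact hab) (ih ht1 ht3)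

lemma f2_map_const {ρ0 : Val V D} {es es2 : List (Expr V D)}
    (h : List.Forall₂ (fun f g : Expr V D => ∀ σ, f σ = g σ) es es2) :
    List.Forall₂ (fun f g : Expr (V := V) (D := D) => ∀ σ, f σ = g σ)
      (es.map fun f => constE (f ρ0)) (es2.map fun f => constE (f ρ0)) := by
  induction h with
  | nil => exact .nil
  | cons hab _ ih => exact .cons (fun σ => by simp [constE, hab ρ0]) ih

/-- one-directional transfer for the closure `CC` -/
lemma CC.forward {γ : A → A → Option A} {t1 t2 : P A V D} (h : CC γ t1 t2) :
    (∀ ρ α t1', Step γ t1 ρ α t1' →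
        ∃ α' t2', DataEq α α' ∧ Step γ t2 ρ α' t2' ∧ CC γ t1' t2') ∧
    (∀ ρ, Term t1 ρ → Term t2 ρ) := by
  induction h with
  | base hb =>
      obtain ⟨R, hR, h12⟩ := hb
      refine ⟨?_, ?_⟩
      · intro ρ α t1' hs
        obtain ⟨α', t2', hde, hstep, hr⟩ := (hR _ _ h12).1 ρ α t1' hs
        exact ⟨α', t2', hde, hstep, .base ⟨R, hR, hr⟩⟩
      · intro ρ ht
        exact ((hR _ _ h12).2.2 ρ).mp ht
  | alt hx hy ihx ihy =>
      refine ⟨?_, ?_⟩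
      · intro ρ α t1' hs
        cases hs with
        | altL s =>
            obtain ⟨α', t2', hde, hstep, hc⟩ := ihx.1 _ _ _ s
            exact ⟨α', t2', hde, .altL hstep, hc⟩
        | altR s =>
            obtain ⟨α', t2', hde, hstep, hc⟩ := ihy.1 _ _ _ s
            exact ⟨α', t2', hde, .altR hstep, hc⟩
      · intro ρ ht
        cases ht with
        | altL h1 => exact .altL (ihx.2 _ h1)
        | altR h1 => exact .altR (ihy.2 _ h1)
  | seq hx hy ihx ihy =>
      refine ⟨?_, ?_⟩
      · intro ρ α t1' hs
        cases hs with
        | seqL s =>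
            obtain ⟨α', x2', hde, hstep, hc⟩ := ihx.1 _ _ _ s
            exact ⟨α', _, hde, .seqL hstep, .seq hc hy⟩
        | seqR hterm s =>
            obtain ⟨α', y2', hde, hstep, hc⟩ := ihy.1 _ _ _ s
            exact ⟨α', _, hde, .seqR (ihx.2 _ hterm) hstep, hc⟩
      · intro ρ ht
        cases ht with
        | seq h1 h2 => exact .seq (ihx.2 _ h1) (ihy.2 _ h2)
  | iter hx hy ihx ihy =>
      refine ⟨?_, ?_⟩
      · intro ρ α t1' hs
        cases hs with
        | iterExit s =>
            obtain ⟨α', y2', hde, hstep, hc⟩ := ihy.1 _ _ _ s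
            exact ⟨α', _, hde, .iterExit hstep, hc⟩
        | iterLoop s =>
            obtain ⟨α', x2', hde, hstep, hc⟩ := ihx.1 _ _ _ s
            exact ⟨α', _, hde, .iterLoop hstep, .seq hc (.iter hx hy)⟩
      · intro ρ ht
        cases ht with
        | iter h1 => exact .iter (ihy.2 _ h1)
  | par hx hy ihx ihy =>
      refine ⟨?_, ?_⟩
      · intro ρ α t1' hs
        cases hs with
        | parL s =>
            obtain ⟨α', x2', hde, hstep, hc⟩ := ihx.1 _ _ _ s
            exact ⟨α', _, hde, .parL hstep, .par hc hy⟩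
        | parR s =>
            obtain ⟨α', y2', hde, hstep, hc⟩ := ihy.1 _ _ _ s
            exact ⟨α', _, hde, .parR hstep, .par hx hc⟩
        | parC s1 s2 hab =>
            obtain ⟨α1, x2', hde1, hs1, hc1⟩ := ihx.1 _ _ _ s1
            cases hde1 with
            | basic =>
                obtain ⟨α2, y2', hde2, hs2, hc2⟩ := ihy.1 _ _ _ s2
                cases hde2 with
                | basic =>
                    exact ⟨_, _, .basic, .parC hs1 hs2 hab, .par hc1 hc2⟩
        | parCD s1 s2 hab he hes =>
            obtain ⟨α1, x2', hde1, hs1, hc1⟩ := ihx.1 _ _ _ s1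
            cases hde1 with
            | param he1 hes1 =>
                obtain ⟨α2, y2', hde2, hs2, hc2⟩ := ihy.1 _ _ _ s2
                cases hde2 with
                | param he2 hes2 =>
                    refine ⟨_, _, .param he1 hes1,
                      .parCD hs1 hs2 hab ?_ ?_, .par hc1 hc2⟩
                    · rw [← he1 ρ, ← he2 ρ]; exact he
                    · exact f2_comp3 hes1 hes hes2
      · intro ρ ht
        cases ht with
        | par h1 h2 => exact .par (ihx.2 _ h1) (ihy.2 _ h2)
  | lmerge hx hy ihx ihy =>
      refine ⟨?_, ?_⟩
      · intro ρ α t1' hs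
        cases hs with
        | lmerge s =>
            obtain ⟨α', x2', hde, hstep, hc⟩ := ihx.1 _ _ _ s
            exact ⟨α', _, hde, .lmerge hstep, .par hc hy⟩
      · intro ρ ht
        cases ht
  | cmerge hx hy ihx ihy =>
      refine ⟨?_, ?_⟩
      · intro ρ α t1' hs
        cases hs with
        | cmergeC s1 s2 hab =>
            obtain ⟨α1, x2', hde1, hs1, hc1⟩ := ihx.1 _ _ _ s1
            cases hde1 with
            | basic =>
                obtain ⟨α2, y2', hde2, hs2, hc2⟩ := ihy.1 _ _ _ s2
                cases hde2 with
                | basic =>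
                    exact ⟨_, _, .basic, .cmergeC hs1 hs2 hab, .par hc1 hc2⟩
        | cmergeCD s1 s2 hab he hes =>
            obtain ⟨α1, x2', hde1, hs1, hc1⟩ := ihx.1 _ _ _ s1
            cases hde1 with
            | param he1 hes1 =>
                obtain ⟨α2, y2', hde2, hs2, hc2⟩ := ihy.1 _ _ _ s2
                cases hde2 with
                | param he2 hes2 =>
                    refine ⟨_, _, .param he1 hes1,
                      .cmergeCD hs1 hs2 hab ?_ ?_, .par hc1 hc2⟩
                    · rw [← he1 ρ, ← he2 ρ]; exact he
                    · exact f2_comp3 hes1 hes hes2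
      · intro ρ ht
        cases ht
  | encap H hx ihx =>
      refine ⟨?_, ?_⟩
      · intro ρ α t1' hs
        cases hs with
        | encapB s ha =>
            obtain ⟨α1, x2', hde, hstep, hc⟩ := ihx.1 _ _ _ s
            cases hde with
            | basic => exact ⟨_, _, .basic, .encapB hstep ha, .encap H hc⟩
        | encapP s ha =>
            obtain ⟨α1, x2', hde, hstep, hc⟩ := ihx.1 _ _ _ s
            cases hde with
            | param he1 hes1 =>
                exact ⟨_, _, .param he1 hes1, .encapP hstep ha, .encap H hc⟩
        | encapA s =>
            obtain ⟨α1, x2', hde, hstep, hc⟩ := ihx.1 _ _ _ s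
            cases hde with
            | assign he1 =>
                exact ⟨_, _, .assign he1, .encapA hstep, .encap H hc⟩
      · intro ρ ht
        cases ht with
        | encap h1 => exact .encap (ihx.2 _ h1)
  | gc φ hx ihx =>
      refine ⟨?_, ?_⟩
      · intro ρ α t1' hs
        cases hs with
        | gc hφ s =>
            obtain ⟨α', x2', hde, hstep, hc⟩ := ihx.1 _ _ _ s
            exact ⟨α', _, hde, .gc hφ hstep, hc⟩
      · intro ρ ht
        cases ht with
        | gc hφ h1 => exact .gc hφ (ihx.2 _ h1)
  | eval ρ0 hx ihx =>
      refine ⟨?_, ?_⟩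
      · intro ρ α t1' hs
        cases hs with
        | evalB s =>
            obtain ⟨α1, x2', hde, hstep, hc⟩ := ihx.1 _ _ _ s
            cases hde with
            | basic => exact ⟨_, _, .basic, .evalB hstep, .eval ρ0 hc⟩
        | evalP s =>
            obtain ⟨α1, x2', hde, hstep, hc⟩ := ihx.1 _ _ _ s
            cases hde with
            | param he1 hes1 =>
                refine ⟨_, _, .param ?_ ?_, .evalP hstep, .eval ρ0 hc⟩
                · intro σ; simp [constE, he1 ρ0]
                · exact f2_map_const hes1
        | evalA s =>
            obtain ⟨α1, x2', hde, hstep, hc⟩ := ihx.1 _ _ _ s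
            cases hde with
            | assign he1 =>
                have hst := Step.evalA (ρ' := ρ) hstep
                rw [← he1 ρ0] at hst
                exact ⟨_, _, .assign (fun _ => rfl), hst, .eval _ hc⟩
      · intro ρ ht
        cases ht with
        | eval h1 => exact .eval (ihx.2 _ h1)

lemma CC.isBisim (γ : A → A → Option A) :
    IsBisim γ (CC (A := A) (V := V) (D := D) γ) := by
  intro t1 t2 h
  refine ⟨(CC.forward h).1, ?_,
    fun ρ => ⟨(CC.forward h).2 ρ, (CC.forward h.symmC).2 ρ⟩⟩
  intro ρ α t2' hs
  obtain ⟨α', t1', hde, hstep, hc⟩ := (CC.forward h.symmC).1 ρ α t2' hs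
  exact ⟨α', t1', hde, hstep, hc.symmC⟩

/-- Proposition 2 of the paper: bisimulation equivalence on
closed process terms of deACPei is a congruence with respect to all operators
of deACPei whose result sort is `Proc` and that have at least one argument of
sort `Proc`. -/
theorem bisim_congruence {A V D : Type} [Finite A] [Countable V] [Nonempty D]
    (γ : A → A → Option A) (hγ : GammaOK γ) :
    ∀ (t1 t1' t2 t2' : P A V D) (φ : Cond V D),
      Bisim γ t1 t2 → Bisim γ t1' t2' →
      Bisim γ (.alt t1 t1') (.alt t2 t2') ∧
      Bisim γ (.seq t1 t1') (.seq t2 t2') ∧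
      Bisim γ (.iter t1 t1') (.iter t2 t2') ∧
      Bisim γ (.par t1 t1') (.par t2 t2') ∧
      Bisim γ (.lmerge t1 t1') (.lmerge t2 t2') ∧
      Bisim γ (.cmerge t1 t1') (.cmerge t2 t2') ∧
      (∀ H : Set A, Bisim γ (.encap H t1) (.encap H t2)) ∧
      Bisim γ (.gc φ t1) (.gc φ t2) ∧
      (∀ σ : Val V D, Bisim γ (.eval σ t1) (.eval σ t2)) := by
  intro t1 t1' t2 t2' φ h h'
  exact ⟨⟨CC γ, CC.isBisim γ, .alt (.base h) (.base h')⟩,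
    ⟨CC γ, CC.isBisim γ, .seq (.base h) (.base h')⟩,
    ⟨CC γ, CC.isBisim γ, .iter (.base h) (.base h')⟩,
    ⟨CC γ, CC.isBisim γ, .par (.base h) (.base h')⟩,
    ⟨CC γ, CC.isBisim γ, .lmerge (.base h) (.base h')⟩,
    ⟨CC γ, CC.isBisim γ, .cmerge (.base h) (.base h')⟩,
    fun H => ⟨CC γ, CC.isBisim γ, .encap H (.base h)⟩,
    ⟨CC γ, CC.isBisim γ, .gc φ (.base h)⟩,
    fun σ => ⟨CC γ, CC.isBisim γ, .eval σ (.base h)⟩⟩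

end DeACPei
end

section
/- Let p′ and p″ be evaluation-free, auxiliary-operator-free closed process terms of deACPei, and let σ be a computation of some such term p. Then σ is a computation of p′ ∥ p″ if and only if there exist a computation σ′ of p′ and a computation σ″ of p″ such that σ, σ′, and σ″ conjoin (σ ∝ σ′ ∥ σ″). -/
namespace DeACPei

section Aux

variable {A V D : Type}

/-- first component of a parallel composition -/
def pfst : P A V D → P A V D
  | .par x _ => x
  | p => p

/-- second component of a parallel composition -/
def psnd : P A V D → P A V D
  | .par _ y => y
  | p => p

@[simp] lemma pfst_par (x y : P A V D) : pfst (.par x y) = x := rfl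
@[simp] lemma psnd_par (x y : P A V D) : psnd (.par x y) = y := rfl

lemma deriv_gc_true {γ : A → A → Option A} {φ : Cond V D} (x : P A V D)
    (h : ∀ ρ, φ ρ) : Deriv γ (.gc φ x) x := by
  have hφ : φ = fun _ => True := funext fun ρ => eq_true (h ρ)
  rw [hφ]; exact .ax (.gc1 x)

lemma deriv_par_eps_eps {γ : A → A → Option A} :
    Deriv γ (P.par (A := A) (V := V) (D := D) .eps .eps) .eps := by
  apply Deriv.trans (.ax (.cm1e _ _))
  have h1 : Deriv γ (P.lmerge (A := A) (V := V) (D := D) .eps .eps) .delta :=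
    .ax (.cm2e _)
  have h2 : Deriv γ (P.cmerge (A := A) (V := V) (D := D) .eps .eps) .delta :=
    .ax (.cm5e _)
  have h3 : Deriv γ (P.seq (.encap Set.univ (P.eps (A := A) (V := V) (D := D)))
      (.encap Set.univ .eps)) .eps :=
    .trans (.seqC (.ax (.d0 _)) (.ax (.d0 _))) (.ax (.a9 _))
  apply Deriv.trans (Deriv.altC (Deriv.altC (Deriv.altC h1 h1) h2) h3)
  apply Deriv.trans (Deriv.altC (Deriv.altC (.ax (.a3 _)) (.refl _)) (.refl _))
  apply Deriv.trans (Deriv.altC (.ax (.a3 _)) (.refl _))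
  exact Deriv.trans (.ax (.a1 _ _)) (.ax (.a6 _))

lemma deriv_cmerge_atom {γ : A → A → Option A} {α' α'' β : Atom A V D}
    (h : Deriv γ (.cmerge (.seq (.atom α') .eps) (.seq (.atom α'') .eps))
      (.seq (.atom β) (.par .eps .eps))) :
    Deriv γ (.cmerge (.atom α') (.atom α'')) (.atom β) := by
  refine .trans (.cmergeC (.symm (.ax (.a8 _))) (.symm (.ax (.a8 _))))
    (.trans h ?_)
  exact .trans (.seqC (.refl _) deriv_par_eps_eps) (.ax (.a8 _))

lemma deriv_cmerge_basic {γ : A → A → Option A} {a b c : A}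
    (hc : γ a b = some c) :
    Deriv γ (.cmerge (.atom (.basic a)) (.atom (.basic b)))
      (P.atom (A := A) (V := V) (D := D) (.basic c)) := by
  apply deriv_cmerge_atom
  have h : Deriv γ (.cmerge (.seq (ofOptA (some a)) .eps)
        (.seq (ofOptA (some b)) .eps))
      (.seq (ofOptA (V := V) (D := D) (γe γ (some a) (some b)))
        (.par .eps .eps)) := .ax (.cm7 _ _ _ _)
  simpa [ofOptA, γe, hc] using h

lemma deriv_cmerge_param {γ : A → A → Option A} {a b c : A}
    {e e' : Expr V D} {es es' : List (Expr V D)}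
    (hc : γ a b = some c) (hlen : es.length = es'.length)
    (he : ∀ ρ, e ρ = e' ρ)
    (hes : ∀ ρ, List.Forall₂ (fun (f g : Expr V D) => f ρ = g ρ) es es') :
    Deriv γ (.cmerge (.atom (.param a e es)) (.atom (.param b e' es')))
      (.atom (.param c e es)) := by
  apply deriv_cmerge_atom
  refine .trans (.ax (Ax.cm7da _ _ hc hlen)) ?_
  exact deriv_gc_true _ (fun ρ => ⟨he ρ, hes ρ⟩)

lemma rstep_par_inv [Nonempty D] {γ : A → A → Option A} {x y q : P A V D}
    {ρ ρ' : Val V D} {α : Atom A V D}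
    (h : RStep γ (.par x y) ρ α q ρ') :
    (∃ x', q = .par x' y ∧ RStep γ x ρ α x' ρ') ∨
    (∃ y', q = .par x y' ∧ RStep γ y ρ α y' ρ') ∨
    (∃ x' y' α' α'', q = .par x' y' ∧ ρ' = ρ ∧
      RStep γ x ρ α' x' ρ ∧ RStep γ y ρ α'' y' ρ ∧
      Deriv γ (.cmerge (.atom α') (.atom α'')) (.atom α)) := by
  have h0 := h (fun _ => Classical.arbitrary D)
  cases h0 with
  | evalB hst =>
    cases hst with
    | parL hx => exact Or.inl ⟨_, rfl, fun _ => .evalB hx⟩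
    | parR hy => exact Or.inr (Or.inl ⟨_, rfl, fun _ => .evalB hy⟩)
    | parC hx hy hc =>
      exact Or.inr (Or.inr ⟨_, _, _, _, rfl, rfl,
        fun _ => .evalB hx, fun _ => .evalB hy, deriv_cmerge_basic hc⟩)
  | evalP hst =>
    cases hst with
    | parL hx => exact Or.inl ⟨_, rfl, fun _ => .evalP hx⟩
    | parR hy => exact Or.inr (Or.inl ⟨_, rfl, fun _ => .evalP hy⟩)
    | @parCD _ _ _ _ _ a1 b1 c1 e1 e1' es1 es1' hx hy hc hee hfor =>
      refine Or.inr (Or.inr ⟨_, _, _, _, rfl, rfl,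
        fun _ => .evalP hx, fun _ => .evalP hy, ?_⟩)
      refine deriv_cmerge_param hc ?_ (fun _ => hee) (fun _ => ?_)
      · simpa using hfor.length_eq
      · rw [List.forall₂_map_right_iff, List.forall₂_map_left_iff]
        exact hfor.imp fun _ _ h => h
  | evalA hst =>
    cases hst with
    | parL hx => exact Or.inl ⟨_, rfl, fun _ => .evalA hx⟩
    | parR hy => exact Or.inr (Or.inl ⟨_, rfl, fun _ => .evalA hy⟩)

end Aux

/-- Lemma 3 of the paper: let `p′` and `p″` be evaluation-free,
auxiliary-operator-free closed process terms of deACPei, and let `σ` be a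
computation of some such term `p`.  Then `σ` is a computation of `p′ ∥ p″` if
and only if there exist a computation `σ′` of `p′` and a computation `σ″` of
`p″` such that `σ`, `σ′`, and `σ″` conjoin (`σ ∝ σ′ ∥ σ″`). -/
theorem comp_par_iff_conjoin {A V D : Type} [Finite A] [Countable V]
    [Nonempty D] (γ : A → A → Option A) (hγ : GammaOK γ) :
    ∀ p' p'' : P A V D, RGTerm p' → RGTerm p'' →
      ∀ σ : Comp (A := A) (V := V) (D := D) γ,
        (∃ p : P A V D, RGTerm p ∧ σ.isOf p) →
        (σ.isOf (.par p' p'') ↔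
          ∃ σ' σ'' : Comp (A := A) (V := V) (D := D) γ,
            σ'.isOf p' ∧ σ''.isOf p'' ∧ Conjoin γ σ σ' σ'') := by
  intro p' p'' _ _ σ _
  constructor
  · intro h0
    -- every process term along `σ` is a parallel composition
    have shape : ∀ i, i ≤ σ.n → ∃ x y, σ.proc i = .par x y := by
      intro i
      induction i with
      | zero => intro _; exact ⟨p', p'', h0⟩
      | succ i ih =>
        intro hi
        obtain ⟨x, y, hxy⟩ := ih (Nat.le_of_succ_le hi)
        have hs := σ.step i (Nat.lt_of_succ_le hi)
        cases hl : σ.lab i with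
        | env =>
          rw [hl] at hs
          exact ⟨x, y, (hs : σ.proc (i + 1) = σ.proc i) ▸ hxy⟩
        | act α =>
          rw [hl] at hs
          rw [hxy] at hs
          rcases rstep_par_inv hs with ⟨x', hq, _⟩ | ⟨y', hq, _⟩ |
            ⟨x', y', _, _, hq, _⟩
          · exact ⟨x', y, hq⟩
          · exact ⟨x, y', hq⟩
          · exact ⟨x', y', hq⟩
    have hshape : ∀ i, i ≤ σ.n →
        σ.proc i = .par (pfst (σ.proc i)) (psnd (σ.proc i)) := by
      intro i hi
      obtain ⟨x, y, hxy⟩ := shape i hi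
      rw [hxy]; rfl
    have key : ∀ i, i < σ.n → ∃ lp : Lab A V D × Lab A V D,
        StepL γ (pfst (σ.proc i)) (σ.val i) lp.1 (pfst (σ.proc (i + 1)))
          (σ.val (i + 1)) ∧
        StepL γ (psnd (σ.proc i)) (σ.val i) lp.2 (psnd (σ.proc (i + 1)))
          (σ.val (i + 1)) ∧
        ((lp.1 ≠ .env ∧ lp.2 = .env ∧ σ.lab i = lp.1) ∨
         (lp.1 = .env ∧ lp.2 ≠ .env ∧ σ.lab i = lp.2) ∨
         (lp.1 = .env ∧ lp.2 = .env ∧ σ.lab i = .env) ∨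
         (∃ α' α'' β : Atom A V D, lp.1 = .act α' ∧ lp.2 = .act α'' ∧
           σ.lab i = .act β ∧
           Deriv γ (.cmerge (.atom α') (.atom α'')) (.atom β))) := by
      intro i hi
      have hs := σ.step i hi
      have h1 := hshape i (le_of_lt hi)
      cases hl : σ.lab i with
      | env =>
        rw [hl] at hs
        have heq : σ.proc (i + 1) = σ.proc i := hs
        exact ⟨(.env, .env), congrArg pfst heq, congrArg psnd heq,
          Or.inr (Or.inr (Or.inl ⟨rfl, rfl, rfl⟩))⟩
      | act α =>
        rw [hl] at hs
        rw [h1] at hs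
        rcases rstep_par_inv hs with ⟨x', hq, hx⟩ | ⟨y', hq, hy⟩ |
          ⟨x', y', α', α'', hq, hρ, hx, hy, hd⟩
        · refine ⟨(.act α, .env), ?_, ?_, Or.inl ⟨by simp, rfl, rfl⟩⟩
          · show RStep γ _ _ _ _ _
            rw [hq]; exact hx
          · show psnd (σ.proc (i + 1)) = psnd (σ.proc i)
            rw [hq]; rfl
        · refine ⟨(.env, .act α), ?_, ?_,
            Or.inr (Or.inl ⟨rfl, by simp, rfl⟩)⟩
          · show pfst (σ.proc (i + 1)) = pfst (σ.proc i)
            rw [hq]; rfl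
          · show RStep γ _ _ _ _ _
            rw [hq]; exact hy
        · refine ⟨(.act α', .act α''), ?_, ?_,
            Or.inr (Or.inr (Or.inr ⟨α', α'', α, rfl, rfl, rfl, hd⟩))⟩
          · show RStep γ _ _ _ _ _
            rw [hq, hρ]; exact hx
          · show RStep γ _ _ _ _ _
            rw [hq, hρ]; exact hy
    obtain ⟨lab2, lab2_spec⟩ : ∃ lab2 : ℕ → Lab A V D × Lab A V D,
        ∀ i, i < σ.n →
        StepL γ (pfst (σ.proc i)) (σ.val i) (lab2 i).1 (pfst (σ.proc (i + 1)))
          (σ.val (i + 1)) ∧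
        StepL γ (psnd (σ.proc i)) (σ.val i) (lab2 i).2 (psnd (σ.proc (i + 1)))
          (σ.val (i + 1)) ∧
        (((lab2 i).1 ≠ .env ∧ (lab2 i).2 = .env ∧ σ.lab i = (lab2 i).1) ∨
         ((lab2 i).1 = .env ∧ (lab2 i).2 ≠ .env ∧ σ.lab i = (lab2 i).2) ∨
         ((lab2 i).1 = .env ∧ (lab2 i).2 = .env ∧ σ.lab i = .env) ∨
         (∃ α' α'' β : Atom A V D, (lab2 i).1 = .act α' ∧
           (lab2 i).2 = .act α'' ∧ σ.lab i = .act β ∧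
           Deriv γ (.cmerge (.atom α') (.atom α'')) (.atom β))) :=
      by
        have key' : ∀ i, ∃ lp : Lab A V D × Lab A V D, i < σ.n →
            StepL γ (pfst (σ.proc i)) (σ.val i) lp.1 (pfst (σ.proc (i + 1)))
              (σ.val (i + 1)) ∧
            StepL γ (psnd (σ.proc i)) (σ.val i) lp.2 (psnd (σ.proc (i + 1)))
              (σ.val (i + 1)) ∧
            ((lp.1 ≠ .env ∧ lp.2 = .env ∧ σ.lab i = lp.1) ∨
             (lp.1 = .env ∧ lp.2 ≠ .env ∧ σ.lab i = lp.2) ∨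
             (lp.1 = .env ∧ lp.2 = .env ∧ σ.lab i = .env) ∨
             (∃ α' α'' β : Atom A V D, lp.1 = .act α' ∧ lp.2 = .act α'' ∧
               σ.lab i = .act β ∧
               Deriv γ (.cmerge (.atom α') (.atom α'')) (.atom β))) := by
          intro i
          by_cases h : i < σ.n
          · exact (key i h).imp fun lp hlp _ => hlp
          · exact ⟨(.env, .env), fun h' => absurd h' h⟩
        obtain ⟨lab2, hlab2⟩ := Classical.axiomOfChoice key'
        exact ⟨lab2, hlab2⟩
    refine ⟨⟨σ.n, fun i => pfst (σ.proc i), σ.val, fun i => (lab2 i).1,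
        fun i hi => (lab2_spec i hi).1⟩,
      ⟨σ.n, fun i => psnd (σ.proc i), σ.val, fun i => (lab2 i).2,
        fun i hi => (lab2_spec i hi).2.1⟩, ?_, ?_, ?_⟩
    · show pfst (σ.proc 0) = p'
      rw [show σ.proc 0 = P.par p' p'' from h0]; rfl
    · show psnd (σ.proc 0) = p''
      rw [show σ.proc 0 = P.par p' p'' from h0]; rfl
    · exact ⟨rfl, rfl, fun i hi => hshape i hi,
        fun i _ => ⟨rfl, rfl⟩, fun i hi => (lab2_spec i hi).2.2⟩
  · rintro ⟨σ', σ'', h1, h2, hc⟩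
    have h3 := hc.2.2.1 0 (Nat.zero_le _)
    show σ.proc 0 = _
    rw [h3, h1, h2]

end DeACPei
end
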